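/- arXiv:2207.01024 — 4 statements merged into one kernel-verified Lean document; each statement's English description precedes it below -/
import Mathlib

section
/- Let P be a shape-invariant predicate on subsets of V. If R, R' ⊆ V both satisfy P, |R| = |R'|, and R and R' have the same shape, then there is a TJ(P)-sequence from R to R' of length exactly |R ∖ R'| in which every set in the sequence has the same shape as R. -/
set_option linter.unusedSectionVars false


/-! Shapes framework: `V` is a finite type partitioned into types `Vp 0, …, Vp (t-1)`;
`q ≥ 1` is a fixed integer. A shape is a function `Fin t → Option ℕ`, where `none`
represents the symbol ⊤. -/

variable {α : Type*} [DecidableEq α] [Fintype α]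

/-- The partition of the vertex set into `t` pairwise disjoint nonempty types. -/
def IsTypePartition {t : ℕ} (Vp : Fin t → Finset α) : Prop :=
  (∀ i, (Vp i).Nonempty) ∧ (∀ i j, i ≠ j → Disjoint (Vp i) (Vp j)) ∧
    (∀ v : α, ∃ i, v ∈ Vp i)

/-- The signature of a set `X`: `sig Vp X i = |V_i ∩ X|`. -/
def sig {t : ℕ} (Vp : Fin t → Finset α) (X : Finset α) (i : Fin t) : ℕ :=
  ((Vp i) ∩ X).card

/-- The (unique) shape of a set `X`: it is `⊤` (i.e. `none`) at `i` when
`q ≤ |V_i ∩ X| ≤ |V_i| − q`, and `|V_i ∩ X|` otherwise.  A set `X` has shape `σ`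
iff `shapeOf q Vp X = σ`. -/
def shapeOf {t : ℕ} (q : ℕ) (Vp : Fin t → Finset α) (X : Finset α) (i : Fin t) : Option ℕ :=
  if q ≤ sig Vp X i ∧ sig Vp X i ≤ (Vp i).card - q then none else some (sig Vp X i)

/-- A predicate on subsets of `V` is shape-invariant if any two subsets with the same
shape either both satisfy it or both fail it. -/
def ShapeInvariant {t : ℕ} (q : ℕ) (Vp : Fin t → Finset α) (P : Finset α → Prop) : Prop :=
  ∀ X Y : Finset α, shapeOf q Vp X = shapeOf q Vp Y → (P X ↔ P Y)

/-- `TJSeq P seq ℓ S S'` : the sequence `seq 0, …, seq ℓ` is a TJ(P)-sequence from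
`S` to `S'` (of length `ℓ`): consecutive sets differ by a single token jump and
all sets satisfy `P`. -/
def TJSeq (P : Finset α → Prop) (seq : ℕ → Finset α) (ℓ : ℕ) (S S' : Finset α) : Prop :=
  seq 0 = S ∧ seq ℓ = S' ∧ (∀ i ≤ ℓ, P (seq i)) ∧
    ∀ i < ℓ, (seq i \ seq (i + 1)).card = 1 ∧ (seq (i + 1) \ seq i).card = 1

lemma sum_sig {t : ℕ} (Vp : Fin t → Finset α) (hVp : IsTypePartition Vp) (X : Finset α) :
    ∑ i, sig Vp X i = X.card := by
  classical
  obtain ⟨-, hdisj, hcov⟩ := hVp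
  have hX : X = Finset.univ.biUnion (fun i => Vp i ∩ X) := by
    ext v
    simp only [Finset.mem_biUnion, Finset.mem_univ, Finset.mem_inter, true_and]
    constructor
    · intro hv; obtain ⟨i, hi⟩ := hcov v; exact ⟨i, hi, hv⟩
    · rintro ⟨i, -, hv⟩; exact hv
  conv_rhs => rw [hX]
  rw [Finset.card_biUnion]
  · rfl
  · intro i _ j _ hij
    exact Finset.disjoint_of_subset_left Finset.inter_subset_left
      (Finset.disjoint_of_subset_right Finset.inter_subset_left (hdisj i j hij))

lemma shape_top {t q : ℕ} {Vp : Fin t → Finset α} {R R' : Finset α}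
    (h : shapeOf q Vp R = shapeOf q Vp R') (i : Fin t)
    (hne : sig Vp R i ≠ sig Vp R' i) :
    (q ≤ sig Vp R i ∧ sig Vp R i ≤ (Vp i).card - q) ∧
    (q ≤ sig Vp R' i ∧ sig Vp R' i ≤ (Vp i).card - q) := by
  have h' := congrFun h i
  unfold shapeOf at h'
  by_cases h1 : q ≤ sig Vp R i ∧ sig Vp R i ≤ (Vp i).card - q <;>
    by_cases h2 : q ≤ sig Vp R' i ∧ sig Vp R' i ≤ (Vp i).card - q <;>
    simp [h1, h2] at h' ⊢ <;> tauto

lemma sig_swap {t : ℕ} (Vp : Fin t → Finset α) {R : Finset α} {x y : α}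
    (hx : x ∈ R) (hy : y ∉ R) (k : Fin t) :
    sig Vp (insert y (R.erase x)) k
      = sig Vp R k - (if x ∈ Vp k then 1 else 0) + (if y ∈ Vp k then 1 else 0) := by
  unfold sig
  have hxy : x ≠ y := fun h => hy (h ▸ hx)
  by_cases hxk : x ∈ Vp k <;> by_cases hyk : y ∈ Vp k <;> simp only [hxk, hyk, if_true, if_false]
  · have hset : Vp k ∩ insert y (R.erase x) = insert y ((Vp k ∩ R).erase x) := by
      ext a
      simp only [Finset.mem_inter, Finset.mem_insert, Finset.mem_erase]
      constructor
      · rintro ⟨ha, h | ⟨h1, h2⟩⟩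
        · exact Or.inl h
        · exact Or.inr ⟨h1, ha, h2⟩
      · rintro (h | ⟨h1, h2, h3⟩)
        · exact ⟨h ▸ hyk, Or.inl h⟩
        · exact ⟨h2, Or.inr ⟨h1, h3⟩⟩
    have hxm : x ∈ Vp k ∩ R := Finset.mem_inter.mpr ⟨hxk, hx⟩
    have h1 : 1 ≤ (Vp k ∩ R).card := Finset.card_pos.mpr ⟨x, hxm⟩
    rw [hset, Finset.card_insert_of_notMem (by simp [hy]), Finset.card_erase_of_mem hxm]
  · have hset : Vp k ∩ insert y (R.erase x) = (Vp k ∩ R).erase x := by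
      ext a
      simp only [Finset.mem_inter, Finset.mem_insert, Finset.mem_erase]
      constructor
      · rintro ⟨ha, h | ⟨h1, h2⟩⟩
        · exact absurd (h ▸ ha) hyk
        · exact ⟨h1, ha, h2⟩
      · rintro ⟨h1, h2, h3⟩
        exact ⟨h2, Or.inr ⟨h1, h3⟩⟩
    have hxm : x ∈ Vp k ∩ R := Finset.mem_inter.mpr ⟨hxk, hx⟩
    rw [hset, Finset.card_erase_of_mem hxm]
    omega
  · have hset : Vp k ∩ insert y (R.erase x) = insert y (Vp k ∩ R) := by
      ext a
      simp only [Finset.mem_inter, Finset.mem_insert, Finset.mem_erase]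
      constructor
      · rintro ⟨ha, h | ⟨h1, h2⟩⟩
        · exact Or.inl h
        · exact Or.inr ⟨ha, h2⟩
      · rintro (h | ⟨h1, h2⟩)
        · exact ⟨h ▸ hyk, Or.inl h⟩
        · exact ⟨h1, Or.inr ⟨fun he => hxk (he ▸ h1), h2⟩⟩
    rw [hset, Finset.card_insert_of_notMem (by simp [hy])]
    omega
  · have hset : Vp k ∩ insert y (R.erase x) = Vp k ∩ R := by
      ext a
      simp only [Finset.mem_inter, Finset.mem_insert, Finset.mem_erase]
      constructor
      · rintro ⟨ha, h | ⟨h1, h2⟩⟩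
        · exact absurd (h ▸ ha) hyk
        · exact ⟨ha, h2⟩
      · rintro ⟨h1, h2⟩
        exact ⟨h1, Or.inr ⟨fun he => hxk (he ▸ h1), h2⟩⟩
    rw [hset]
    omega

lemma sdiff_inter_card {A B : Finset α} (i : Finset α) :
    (i ∩ A) \ (i ∩ B) = (A \ B) ∩ i := by
  ext a
  simp only [Finset.mem_sdiff, Finset.mem_inter, not_and]
  tauto

lemma step_lemma {t q : ℕ} (Vp : Fin t → Finset α)
    (hVp : IsTypePartition Vp)
    (R R' : Finset α) (hcard : R.card = R'.card)
    (hshape : shapeOf q Vp R = shapeOf q Vp R')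
    (hne : (R \ R').Nonempty) :
    ∃ x ∈ R \ R', ∃ y ∈ R' \ R,
      shapeOf q Vp (insert y (R.erase x)) = shapeOf q Vp R := by
  classical
  have hdisj := hVp.2.1
  have hcov := hVp.2.2
  have hsum : ∑ i, sig Vp R i = ∑ i, sig Vp R' i := by
    rw [sum_sig Vp hVp, sum_sig Vp hVp, hcard]
  -- a type containing an element of R \ R' where sig R ≥ sig R'
  have hex : ∃ i, ((R \ R') ∩ Vp i).Nonempty ∧ sig Vp R' i ≤ sig Vp R i := by
    by_contra hcon
    push_neg at hcon
    have hle : ∀ i ∈ Finset.univ, sig Vp R i ≤ sig Vp R' i := by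
      intro i _
      by_cases h : ((R \ R') ∩ Vp i).Nonempty
      · exact (hcon i h).le
      · refine Finset.card_le_card fun v hv => ?_
        simp only [Finset.mem_inter] at hv ⊢
        refine ⟨hv.1, ?_⟩
        by_contra hv'
        exact h ⟨v, by simp [Finset.mem_sdiff, hv.2, hv', hv.1]⟩
    obtain ⟨x₀, hx₀⟩ := hne
    obtain ⟨i₀, hi₀⟩ := hcov x₀
    have hstrict : sig Vp R i₀ < sig Vp R' i₀ :=
      hcon i₀ ⟨x₀, Finset.mem_inter.mpr ⟨hx₀, hi₀⟩⟩
    exact absurd hsum (Finset.sum_lt_sum hle ⟨i₀, Finset.mem_univ _, hstrict⟩).ne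
  obtain ⟨i, ⟨x, hx⟩, hge⟩ := hex
  rw [Finset.mem_inter] at hx
  obtain ⟨hxRR', hxi⟩ := hx
  have hxR : x ∈ R := (Finset.mem_sdiff.mp hxRR').1
  have hxR' : x ∉ R' := (Finset.mem_sdiff.mp hxRR').2
  rcases eq_or_lt_of_le hge with heq | hlt
  · -- sig R i = sig R' i : swap within type i, signature unchanged
    have hyex : ((R' \ R) ∩ Vp i).Nonempty := by
      have h1 : (Vp i ∩ R) \ (Vp i ∩ R') = (R \ R') ∩ Vp i := sdiff_inter_card _
      have h2 : (Vp i ∩ R') \ (Vp i ∩ R) = (R' \ R) ∩ Vp i := sdiff_inter_card _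
      have e1 := Finset.card_sdiff_add_card_inter (Vp i ∩ R) (Vp i ∩ R')
      have e2 := Finset.card_sdiff_add_card_inter (Vp i ∩ R') (Vp i ∩ R)
      rw [h1] at e1
      rw [h2, Finset.inter_comm (Vp i ∩ R') (Vp i ∩ R)] at e2
      have hpos : 0 < ((R \ R') ∩ Vp i).card := Finset.card_pos.mpr ⟨x, by simp [hxR, hxR', hxi]⟩
      have : sig Vp R i = (Vp i ∩ R).card := rfl
      have : sig Vp R' i = (Vp i ∩ R').card := rfl
      apply Finset.card_pos.mp
      have hss : sig Vp R i = sig Vp R' i := heq.symm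
      unfold sig at hss
      omega
    obtain ⟨y, hy⟩ := hyex
    rw [Finset.mem_inter] at hy
    obtain ⟨hyRR, hyi⟩ := hy
    have hyR' : y ∈ R' := (Finset.mem_sdiff.mp hyRR).1
    have hyR : y ∉ R := (Finset.mem_sdiff.mp hyRR).2
    refine ⟨x, hxRR', y, hyRR, ?_⟩
    funext k
    have hs := sig_swap Vp hxR hyR k
    have hind : (if x ∈ Vp k then (1:ℕ) else 0) = (if y ∈ Vp k then 1 else 0) := by
      rcases eq_or_ne k i with rfl | hk
      · simp [hxi, hyi]
      · rw [if_neg (Finset.disjoint_left.mp (hdisj i k (Ne.symm hk)) hxi),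
          if_neg (Finset.disjoint_left.mp (hdisj i k (Ne.symm hk)) hyi)]
    have hsig : sig Vp (insert y (R.erase x)) k = sig Vp R k := by
      rw [hs, hind]
      rcases eq_or_ne k i with rfl | hk
      · have : 0 < sig Vp R k := Finset.card_pos.mpr ⟨x, Finset.mem_inter.mpr ⟨hxi, hxR⟩⟩
        simp only [hyi, if_true]
        omega
      · rw [if_neg (Finset.disjoint_left.mp (hdisj i k (Ne.symm hk)) hyi)]
        omega
    unfold shapeOf
    rw [hsig]
  · -- sig R' i < sig R i : remove in type i, add in some type j with sig R j < sig R' j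
    have hjex : ∃ j, sig Vp R j < sig Vp R' j := by
      by_contra hcon
      push_neg at hcon
      exact absurd hsum.symm
        (Finset.sum_lt_sum (fun j _ => hcon j) ⟨i, Finset.mem_univ _, hlt⟩).ne
    obtain ⟨j, hj⟩ := hjex
    have hji : j ≠ i := fun h => absurd (h ▸ hj) (not_lt.mpr hge)
    have hyex : ((R' \ R) ∩ Vp j).Nonempty := by
      have h2 : (Vp j ∩ R') \ (Vp j ∩ R) = (R' \ R) ∩ Vp j := sdiff_inter_card _
      have e2 := Finset.card_sdiff_add_card_inter (Vp j ∩ R') (Vp j ∩ R)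
      rw [h2] at e2
      have e3 : (Vp j ∩ R' ∩ (Vp j ∩ R)).card ≤ (Vp j ∩ R).card :=
        Finset.card_le_card Finset.inter_subset_right
      apply Finset.card_pos.mp
      unfold sig at hj
      omega
    obtain ⟨y, hy⟩ := hyex
    rw [Finset.mem_inter] at hy
    obtain ⟨hyRR, hyj⟩ := hy
    have hyR' : y ∈ R' := (Finset.mem_sdiff.mp hyRR).1
    have hyR : y ∉ R := (Finset.mem_sdiff.mp hyRR).2
    refine ⟨x, hxRR', y, hyRR, ?_⟩
    have hti := shape_top hshape i hlt.ne'
    have htj := shape_top hshape j hj.ne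
    funext k
    have hs := sig_swap Vp hxR hyR k
    rcases eq_or_ne k i with rfl | hki
    · have hsig : sig Vp (insert y (R.erase x)) k = sig Vp R k - 1 := by
        rw [hs, if_pos hxi, if_neg (Finset.disjoint_left.mp (hdisj j k hji) hyj)]
        omega
      unfold shapeOf
      rw [hsig, if_pos ⟨by omega, by omega⟩, if_pos ⟨hti.1.1, hti.1.2⟩]
    rcases eq_or_ne k j with rfl | hkj
    · have hsig : sig Vp (insert y (R.erase x)) k = sig Vp R k + 1 := by
        rw [hs, if_pos hyj, if_neg (Finset.disjoint_left.mp (hdisj i k (Ne.symm hki)) hxi)]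
        omega
      unfold shapeOf
      rw [hsig, if_pos ⟨by omega, by omega⟩, if_pos ⟨htj.1.1, htj.1.2⟩]
    · have hsig : sig Vp (insert y (R.erase x)) k = sig Vp R k := by
        rw [hs, if_neg (Finset.disjoint_left.mp (hdisj i k (Ne.symm hki)) hxi),
          if_neg (Finset.disjoint_left.mp (hdisj j k (Ne.symm hkj)) hyj)]
        omega
      unfold shapeOf
      rw [hsig]

lemma main_aux {t q : ℕ} (Vp : Fin t → Finset α)
    (hVp : IsTypePartition Vp) (P : Finset α → Prop)
    (hP : ShapeInvariant q Vp P) (R' : Finset α) (hR' : P R') :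
    ∀ n (R : Finset α), (R \ R').card = n → P R → R.card = R'.card →
      shapeOf q Vp R = shapeOf q Vp R' →
      ∃ seq : ℕ → Finset α, TJSeq P seq n R R' ∧
        ∀ i ≤ n, shapeOf q Vp (seq i) = shapeOf q Vp R' := by
  intro n
  induction n with
  | zero =>
    intro R h0 hPR hc hs
    have hRR : R = R' := by
      have hsub : R ⊆ R' := by
        rwa [Finset.card_eq_zero, Finset.sdiff_eq_empty_iff_subset] at h0
      exact Finset.eq_of_subset_of_card_le hsub hc.ge
    subst hRR
    exact ⟨fun _ => R, ⟨rfl, rfl, fun i _ => hPR, fun i hi => absurd hi (Nat.not_lt_zero i)⟩,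
      fun i _ => hs⟩
  | succ n ih =>
    intro R h0 hPR hc hs
    have hne : (R \ R').Nonempty := Finset.card_pos.mp (by omega)
    obtain ⟨x, hx, y, hy, hSshape⟩ := step_lemma Vp hVp R R' hc hs hne
    set S := insert y (R.erase x) with hS
    have hxR : x ∈ R := (Finset.mem_sdiff.mp hx).1
    have hxR' : x ∉ R' := (Finset.mem_sdiff.mp hx).2
    have hyR' : y ∈ R' := (Finset.mem_sdiff.mp hy).1
    have hyR : y ∉ R := (Finset.mem_sdiff.mp hy).2
    have hxy : x ≠ y := fun h => hyR (h ▸ hxR)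
    have hScard : S.card = R.card := by
      rw [hS, Finset.card_insert_of_notMem (by simp [hyR]), Finset.card_erase_of_mem hxR]
      have : 1 ≤ R.card := Finset.card_pos.mpr ⟨x, hxR⟩
      omega
    have hSd : (S \ R').card = n := by
      have hset : S \ R' = (R \ R').erase x := by
        ext a
        simp only [hS, Finset.mem_sdiff, Finset.mem_insert, Finset.mem_erase]
        constructor
        · rintro ⟨h1 | ⟨h1, h2⟩, h3⟩
          · exact absurd (h1 ▸ hyR') h3
          · exact ⟨h1, h2, h3⟩
        · rintro ⟨h1, h2, h3⟩
          exact ⟨Or.inr ⟨h1, h2⟩, h3⟩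
      rw [hset, Finset.card_erase_of_mem hx, h0]
      omega
    have hPS : P S := (hP S R hSshape).mpr hPR
    obtain ⟨seq', hseq', hsh'⟩ := ih S hSd hPS (hScard.trans hc) (hSshape.trans hs)
    obtain ⟨hq0, hqn, hqP, hqstep⟩ := hseq'
    refine ⟨fun k => if k = 0 then R else seq' (k - 1), ⟨by simp, ?_, ?_, ?_⟩, ?_⟩
    · simp only [Nat.succ_ne_zero, if_false]
      exact hqn
    · intro i hi
      rcases Nat.eq_zero_or_pos i with rfl | hipos
      · simpa using hPR
      · simp only [Nat.pos_iff_ne_zero.mp hipos, if_false]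
        exact hqP (i - 1) (by omega)
    · intro i hi
      rcases Nat.eq_zero_or_pos i with rfl | hipos
      · have hRS : R \ S = {x} := by
            ext a
            simp only [hS, Finset.mem_sdiff, Finset.mem_insert, Finset.mem_erase,
              Finset.mem_singleton, not_or, not_and]
            constructor
            · rintro ⟨h1, h2, h3⟩
              by_contra h4
              exact (h3 h4) h1
            · rintro rfl
              exact ⟨hxR, hxy, fun h => absurd rfl h⟩
        have hSR : S \ R = {y} := by
            ext a
            simp only [hS, Finset.mem_sdiff, Finset.mem_insert, Finset.mem_erase,
              Finset.mem_singleton]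
            constructor
            · rintro ⟨h1 | ⟨h1, h2⟩, h3⟩
              · exact h1
              · exact absurd h2 h3
            · rintro rfl
              exact ⟨Or.inl rfl, hyR⟩
        simp [hq0, hRS, hSR]
      · have hine : i ≠ 0 := Nat.pos_iff_ne_zero.mp hipos
        simp only [hine, Nat.succ_ne_zero, if_false, Nat.add_sub_cancel]
        have := hqstep (i - 1) (by omega)
        rwa [Nat.sub_add_cancel hipos] at this
    · intro i hi
      rcases Nat.eq_zero_or_pos i with rfl | hipos
      · simpa using hs
      · simp only [Nat.pos_iff_ne_zero.mp hipos, if_false]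
        exact hsh' (i - 1) (by omega)

/-- If `R, R'` both satisfy a shape-invariant predicate `P`,
have the same cardinality and the same shape, then there is a TJ(P)-sequence from
`R` to `R'` of length exactly `|R \ R'|` all of whose sets have the same shape as `R`. -/
theorem stmt0 {t q : ℕ} (hq : 1 ≤ q) (Vp : Fin t → Finset α)
    (hVp : IsTypePartition Vp) (P : Finset α → Prop)
    (hP : ShapeInvariant q Vp P)
    (R R' : Finset α) (hR : P R) (hR' : P R') (hcard : R.card = R'.card)
    (hshape : shapeOf q Vp R = shapeOf q Vp R') :
    ∃ seq : ℕ → Finset α, TJSeq P seq (R \ R').card R R' ∧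
      ∀ i ≤ (R \ R').card, shapeOf q Vp (seq i) = shapeOf q Vp R := by

  obtain ⟨seq, h1, h2⟩ := main_aux Vp hVp P hP R' hR' (R \ R').card R rfl hR hcard hshape
  exact ⟨seq, h1, fun i hi => (h2 i hi).trans hshape.symm⟩
end

section
/- Let P be a shape-invariant predicate on subsets of V, and let σ̄_1 and σ̄_2 be two distinct k-feasible shapes. Then σ̄_1 and σ̄_2 are adjacent in the size-k shape graph if and only if there exist sets S_1, S_2 ⊆ V, both satisfying P, with |S_1| = |S_2| = k, such that S_1 has shape σ̄_1, S_2 has shape σ̄_2, and |S_1 ∖ S_2| = |S_2 ∖ S_1| = 1. -/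
/-! Shapes framework: `V` is a finite type partitioned into types `Vp 0, …, Vp (t-1)`;
`q ≥ 1` is a fixed integer. A shape is a function `Fin t → Option ℕ`, where `none`
represents the symbol ⊤. -/

variable {α : Type*} [DecidableEq α] [Fintype α]

/-- A shape `σ` is `k`-feasible (w.r.t. `P`) if some set of cardinality `k` with
shape `σ` satisfies `P`. -/
def KFeasible {t : ℕ} (q : ℕ) (Vp : Fin t → Finset α) (P : Finset α → Prop)
    (k : ℕ) (σ : Fin t → Option ℕ) : Prop :=
  ∃ X : Finset α, X.card = k ∧ shapeOf q Vp X = σ ∧ P X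

/-- Conditions A1–A3 at index `i` for the pair of shapes `(σ1, σ2)`. -/
def Acond {t : ℕ} (q : ℕ) (Vp : Fin t → Finset α)
    (σ1 σ2 : Fin t → Option ℕ) (i : Fin t) : Prop :=
  (∃ a b, σ1 i = some a ∧ σ2 i = some b ∧ b + 1 = a) ∨
  (σ1 i = none ∧ σ2 i = some (q - 1)) ∨
  (σ1 i = some ((Vp i).card - q + 1) ∧ σ2 i = none)

/-- Conditions B1–B3 at index `j` for the pair of shapes `(σ1, σ2)`. -/
def Bcond {t : ℕ} (q : ℕ) (Vp : Fin t → Finset α)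
    (σ1 σ2 : Fin t → Option ℕ) (j : Fin t) : Prop :=
  (∃ a b, σ1 j = some a ∧ σ2 j = some b ∧ a + 1 = b) ∨
  (σ2 j = none ∧ σ1 j = some (q - 1)) ∨
  (σ2 j = some ((Vp j).card - q + 1) ∧ σ1 j = none)

/-- Condition (2) of adjacency: a witness of size `k` and shape `σ1` with the
prescribed signatures at the (possibly undefined) designated indices `oi`, `oj`. -/
def Cond2 {t : ℕ} (q : ℕ) (Vp : Fin t → Finset α) (k : ℕ)
    (σ1 : Fin t → Option ℕ) (oi oj : Option (Fin t)) : Prop :=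
  ∃ S1 : Finset α, S1.card = k ∧ shapeOf q Vp S1 = σ1 ∧
    (∀ i, oi = some i → σ1 i = none → sig Vp S1 i = q) ∧
    (∀ j, oj = some j → σ1 j = none → sig Vp S1 j = (Vp j).card - q)

/-- Condition (3) of adjacency: a witness of size `k` and shape `σ2` with the
prescribed signatures at the (possibly undefined) designated indices `oi`, `oj`. -/
def Cond3 {t : ℕ} (q : ℕ) (Vp : Fin t → Finset α) (k : ℕ)
    (σ2 : Fin t → Option ℕ) (oi oj : Option (Fin t)) : Prop :=
  ∃ S2 : Finset α, S2.card = k ∧ shapeOf q Vp S2 = σ2 ∧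
    (∀ i, oi = some i → σ2 i = none → sig Vp S2 i = (Vp i).card - q) ∧
    (∀ j, oj = some j → σ2 j = none → sig Vp S2 j = q)

/-- The adjacency conditions (1)–(3) for two shapes: either they disagree at exactly
two indices `i` (satisfying A1–A3) and `j` (satisfying B1–B3), or they disagree at
exactly one index, which satisfies A1–A3 (called `i`) or B1–B3 (called `j`);
in all cases the witnesses required by conditions (2) and (3) exist. -/
def ShapeAdj {t : ℕ} (q : ℕ) (Vp : Fin t → Finset α) (k : ℕ)
    (σ1 σ2 : Fin t → Option ℕ) : Prop :=
  (∃ i j : Fin t, i ≠ j ∧ (∀ h, σ1 h ≠ σ2 h ↔ (h = i ∨ h = j)) ∧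
    Acond q Vp σ1 σ2 i ∧ Bcond q Vp σ1 σ2 j ∧
    Cond2 q Vp k σ1 (some i) (some j) ∧ Cond3 q Vp k σ2 (some i) (some j)) ∨
  (∃ i : Fin t, (∀ h, σ1 h ≠ σ2 h ↔ h = i) ∧ Acond q Vp σ1 σ2 i ∧
    Cond2 q Vp k σ1 (some i) none ∧ Cond3 q Vp k σ2 (some i) none) ∨
  (∃ j : Fin t, (∀ h, σ1 h ≠ σ2 h ↔ h = j) ∧ Bcond q Vp σ1 σ2 j ∧
    Cond2 q Vp k σ1 none (some j) ∧ Cond3 q Vp k σ2 none (some j))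

/-- Adjacency in the size-`k` shape graph `S_k`: the vertices are the `k`-feasible
shapes, and two distinct vertices are joined iff the adjacency conditions hold. -/
def GraphAdj {t : ℕ} (q : ℕ) (Vp : Fin t → Finset α) (P : Finset α → Prop)
    (k : ℕ) (σ1 σ2 : Fin t → Option ℕ) : Prop :=
  σ1 ≠ σ2 ∧ KFeasible q Vp P k σ1 ∧ KFeasible q Vp P k σ2 ∧ ShapeAdj q Vp k σ1 σ2


/-! ### Auxiliary lemmas -/

section Aux

variable {t : ℕ}

lemma sig_le_card (Vp : Fin t → Finset α) (X : Finset α) (i : Fin t) :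
    sig Vp X i ≤ (Vp i).card :=
  Finset.card_le_card Finset.inter_subset_left

/-- The shape value attached to a signature value `n` at index `i`. -/
def shapeVal (q : ℕ) (Vp : Fin t → Finset α) (i : Fin t) (n : ℕ) : Option ℕ :=
  if q ≤ n ∧ n ≤ (Vp i).card - q then none else some n

lemma shapeOf_eq (q : ℕ) (Vp : Fin t → Finset α) (X : Finset α) (i : Fin t) :
    shapeOf q Vp X i = shapeVal q Vp i (sig Vp X i) := rfl

lemma shape_some {q : ℕ} {Vp : Fin t → Finset α} {X : Finset α} {i : Fin t} {a : ℕ}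
    (h : shapeOf q Vp X i = some a) :
    sig Vp X i = a ∧ ¬(q ≤ a ∧ a ≤ (Vp i).card - q) := by
  unfold shapeOf at h
  split at h
  · simp at h
  · next hc =>
    obtain rfl : sig Vp X i = a := by injection h
    exact ⟨rfl, hc⟩

lemma shape_none {q : ℕ} {Vp : Fin t → Finset α} {X : Finset α} {i : Fin t}
    (h : shapeOf q Vp X i = none) :
    q ≤ sig Vp X i ∧ sig Vp X i ≤ (Vp i).card - q := by
  unfold shapeOf at h
  split at h
  · next hc => exact hc
  · simp at h

lemma sig_sum {Vp : Fin t → Finset α} (hVp : IsTypePartition Vp) (X : Finset α) :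
    ∑ i, sig Vp X i = X.card := by
  classical
  have hU : (Finset.univ.biUnion fun i => Vp i ∩ X) = X := by
    ext x
    simp only [Finset.mem_biUnion, Finset.mem_inter, Finset.mem_univ, true_and]
    constructor
    · rintro ⟨i, _, hx⟩; exact hx
    · intro hx; obtain ⟨i, hi⟩ := hVp.2.2 x; exact ⟨i, hi, hx⟩
  have hcard := Finset.card_biUnion (s := (Finset.univ : Finset (Fin t)))
    (t := fun i => Vp i ∩ X)
    (fun i _ j _ hij =>
      (hVp.2.1 i j hij).mono Finset.inter_subset_left Finset.inter_subset_left)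
  rw [hU] at hcard
  simpa [sig] using hcard.symm

lemma sig_swap_s1 {Vp : Fin t → Finset α} (hVp : IsTypePartition Vp)
    {S T : Finset α} {u v : α} {i0 j0 : Fin t}
    (hu : u ∈ Vp i0) (hv : v ∈ Vp j0) (huS : u ∈ S) (hvS : v ∉ S)
    (hT : ∀ x, x ∈ T ↔ x = v ∨ (x ∈ S ∧ x ≠ u)) :
    (∀ h, h ≠ i0 → h ≠ j0 → sig Vp T h = sig Vp S h) ∧
      (i0 ≠ j0 → sig Vp T i0 + 1 = sig Vp S i0 ∧ sig Vp T j0 = sig Vp S j0 + 1) ∧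
      (i0 = j0 → ∀ h, sig Vp T h = sig Vp S h) := by
  classical
  have hnot : ∀ (w : α) (a b : Fin t), w ∈ Vp a → b ≠ a → w ∉ Vp b := by
    intro w a b hw hba hwb
    exact (Finset.disjoint_left.mp (hVp.2.1 b a hba)) hwb hw
  have hout : ∀ h, h ≠ i0 → h ≠ j0 → sig Vp T h = sig Vp S h := by
    intro h hhi hhj
    have hu' : u ∉ Vp h := hnot u i0 h hu hhi
    have hv' : v ∉ Vp h := hnot v j0 h hv hhj
    have : Vp h ∩ T = Vp h ∩ S := by
      ext x
      simp only [Finset.mem_inter, hT]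
      constructor
      · rintro ⟨hx, rfl | ⟨hxS, _⟩⟩
        · exact absurd hx hv'
        · exact ⟨hx, hxS⟩
      · rintro ⟨hx, hxS⟩
        refine ⟨hx, Or.inr ⟨hxS, ?_⟩⟩
        rintro rfl; exact hu' hx
    simp [sig, this]
  refine ⟨hout, ?_, ?_⟩
  · intro hij
    have hu' : u ∉ Vp j0 := hnot u i0 j0 hu (Ne.symm hij)
    have hv' : v ∉ Vp i0 := hnot v j0 i0 hv hij
    constructor
    · have hset : Vp i0 ∩ T = (Vp i0 ∩ S).erase u := by
        ext x
        simp only [Finset.mem_inter, Finset.mem_erase, hT]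
        constructor
        · rintro ⟨hx, rfl | ⟨hxS, hxu⟩⟩
          · exact absurd hx hv'
          · exact ⟨hxu, hx, hxS⟩
        · rintro ⟨hxu, hx, hxS⟩
          exact ⟨hx, Or.inr ⟨hxS, hxu⟩⟩
      have hmem : u ∈ Vp i0 ∩ S := Finset.mem_inter.mpr ⟨hu, huS⟩
      have hpos : 1 ≤ (Vp i0 ∩ S).card := Finset.card_pos.mpr ⟨u, hmem⟩
      have := Finset.card_erase_of_mem hmem
      simp only [sig, hset, this]
      omega
    · have hset : Vp j0 ∩ T = insert v (Vp j0 ∩ S) := by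
        ext x
        simp only [Finset.mem_inter, Finset.mem_insert, hT]
        constructor
        · rintro ⟨hx, rfl | ⟨hxS, _⟩⟩
          · exact Or.inl rfl
          · exact Or.inr ⟨hx, hxS⟩
        · rintro (rfl | ⟨hx, hxS⟩)
          · exact ⟨hv, Or.inl rfl⟩
          · refine ⟨hx, Or.inr ⟨hxS, ?_⟩⟩
            rintro rfl; exact hu' hx
      have hvnot : v ∉ Vp j0 ∩ S := fun hmem => hvS (Finset.mem_inter.mp hmem).2
      simp [sig, hset, Finset.card_insert_of_notMem hvnot]
  · rintro rfl h
    by_cases hh : h = i0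
    · subst hh
      have hset : Vp h ∩ T = insert v ((Vp h ∩ S).erase u) := by
        ext x
        simp only [Finset.mem_inter, Finset.mem_insert, Finset.mem_erase, hT]
        constructor
        · rintro ⟨hx, rfl | ⟨hxS, hxu⟩⟩
          · exact Or.inl rfl
          · exact Or.inr ⟨hxu, hx, hxS⟩
        · rintro (rfl | ⟨hxu, hx, hxS⟩)
          · exact ⟨hv, Or.inl rfl⟩
          · exact ⟨hx, Or.inr ⟨hxS, hxu⟩⟩
      have hmem : u ∈ Vp h ∩ S := Finset.mem_inter.mpr ⟨hu, huS⟩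
      have hpos : 1 ≤ (Vp h ∩ S).card := Finset.card_pos.mpr ⟨u, hmem⟩
      have hvnot : v ∉ (Vp h ∩ S).erase u := fun hmem' =>
        hvS (Finset.mem_inter.mp (Finset.mem_of_mem_erase hmem')).2
      have h1 := Finset.card_erase_of_mem hmem
      simp only [sig, hset, Finset.card_insert_of_notMem hvnot, h1]
      omega
    · exact hout h hh hh

lemma build {q : ℕ} {Vp : Fin t → Finset α} (hVp : IsTypePartition Vp)
    {σ2 : Fin t → Option ℕ} {S1 : Finset α} {i0 j0 : Fin t} (hij : i0 ≠ j0)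
    (hagree : ∀ h, h ≠ i0 → h ≠ j0 → shapeOf q Vp S1 h = σ2 h)
    (hpos : 1 ≤ sig Vp S1 i0)
    (hroom : sig Vp S1 j0 < (Vp j0).card)
    (hi : shapeVal q Vp i0 (sig Vp S1 i0 - 1) = σ2 i0)
    (hj : shapeVal q Vp j0 (sig Vp S1 j0 + 1) = σ2 j0) :
    ∃ T : Finset α, shapeOf q Vp T = σ2 ∧ T.card = S1.card ∧
      (S1 \ T).card = 1 ∧ (T \ S1).card = 1 := by
  classical
  obtain ⟨u, hu⟩ : (Vp i0 ∩ S1).Nonempty := Finset.card_pos.mp hpos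
  obtain ⟨hu1, hu2⟩ := Finset.mem_inter.mp hu
  obtain ⟨v, hv1, hv2⟩ : ∃ v ∈ Vp j0, v ∉ S1 := by
    by_contra hcon
    push_neg at hcon
    have hsub : Vp j0 ⊆ S1 := hcon
    have : Vp j0 ∩ S1 = Vp j0 := Finset.inter_eq_left.mpr hsub
    simp only [sig, this] at hroom
    omega
  have huv : u ≠ v := fun h => hv2 (h ▸ hu2)
  set T : Finset α := insert v (S1.erase u) with hTdef
  have hT : ∀ x, x ∈ T ↔ x = v ∨ (x ∈ S1 ∧ x ≠ u) := by
    intro x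
    simp only [hTdef, Finset.mem_insert, Finset.mem_erase]
    tauto
  obtain ⟨hout, hin, -⟩ := sig_swap_s1 hVp hu1 hv1 hu2 hv2 hT
  obtain ⟨hsi, hsj⟩ := hin hij
  have hsd1 : S1 \ T = {u} := by
    ext x
    simp only [Finset.mem_sdiff, Finset.mem_singleton, hT]
    constructor
    · rintro ⟨hx, hnx⟩
      by_contra hxu
      exact hnx (Or.inr ⟨hx, hxu⟩)
    · rintro rfl
      refine ⟨hu2, ?_⟩
      rintro (rfl | ⟨-, h⟩)
      · exact huv rfl
      · exact h rfl
  have hsd2 : T \ S1 = {v} := by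
    ext x
    simp only [Finset.mem_sdiff, Finset.mem_singleton, hT]
    constructor
    · rintro ⟨rfl | ⟨hxS, _⟩, hx⟩
      · rfl
      · exact absurd hxS hx
    · rintro rfl
      exact ⟨Or.inl rfl, hv2⟩
  have hc1 := Finset.card_inter_add_card_sdiff S1 T
  have hc2 := Finset.card_inter_add_card_sdiff T S1
  rw [Finset.inter_comm] at hc2
  have hcard : T.card = S1.card := by
    rw [hsd1] at hc1
    rw [hsd2] at hc2
    simp at hc1 hc2
    omega
  refine ⟨T, ?_, hcard, by simp [hsd1], by simp [hsd2]⟩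
  funext h
  by_cases hhi : h = i0
  · subst hhi
    rw [shapeOf_eq, show sig Vp T h = sig Vp S1 h - 1 by omega]
    exact hi
  · by_cases hhj : h = j0
    · subst hhj
      rw [shapeOf_eq, hsj]
      exact hj
    · rw [shapeOf_eq, hout h hhi hhj, ← shapeOf_eq]
      exact hagree h hhi hhj

lemma Asig {q : ℕ} (hq : 1 ≤ q) {Vp : Fin t → Finset α} {σ1 σ2 : Fin t → Option ℕ}
    {S1 S2 : Finset α} {i : Fin t}
    (hA : Acond q Vp σ1 σ2 i)
    (hs1 : shapeOf q Vp S1 = σ1) (hs2 : shapeOf q Vp S2 = σ2)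
    (c2 : σ1 i = none → sig Vp S1 i = q)
    (c3 : σ2 i = none → sig Vp S2 i = (Vp i).card - q) :
    sig Vp S1 i = sig Vp S2 i + 1 := by
  have h1 : shapeOf q Vp S1 i = σ1 i := congrFun hs1 i
  have h2 : shapeOf q Vp S2 i = σ2 i := congrFun hs2 i
  rcases hA with ⟨a, b, e1, e2, e3⟩ | ⟨e1, e2⟩ | ⟨e1, e2⟩
  · have r1 := (shape_some (h1.trans e1)).1
    have r2 := (shape_some (h2.trans e2)).1
    omega
  · have r1 := c2 e1
    have r2 := (shape_some (h2.trans e2)).1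
    omega
  · have r1 := (shape_some (h1.trans e1)).1
    have r2 := c3 e2
    omega

lemma Bsig {q : ℕ} (hq : 1 ≤ q) {Vp : Fin t → Finset α} {σ1 σ2 : Fin t → Option ℕ}
    {S1 S2 : Finset α} {j : Fin t}
    (hB : Bcond q Vp σ1 σ2 j)
    (hs1 : shapeOf q Vp S1 = σ1) (hs2 : shapeOf q Vp S2 = σ2)
    (c2 : σ1 j = none → sig Vp S1 j = (Vp j).card - q)
    (c3 : σ2 j = none → sig Vp S2 j = q) :
    sig Vp S2 j = sig Vp S1 j + 1 := by
  have h1 : shapeOf q Vp S1 j = σ1 j := congrFun hs1 j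
  have h2 : shapeOf q Vp S2 j = σ2 j := congrFun hs2 j
  rcases hB with ⟨a, b, e1, e2, e3⟩ | ⟨e1, e2⟩ | ⟨e1, e2⟩
  · have r1 := (shape_some (h1.trans e1)).1
    have r2 := (shape_some (h2.trans e2)).1
    omega
  · have r1 := (shape_some (h1.trans e2)).1
    have r2 := c3 e1
    omega
  · have r1 := c2 e2
    have r2 := (shape_some (h2.trans e1)).1
    omega

lemma Aanalysis {q : ℕ} (hq : 1 ≤ q) {Vp : Fin t → Finset α} {σ1 σ2 : Fin t → Option ℕ}
    {S1 S2 : Finset α} {i : Fin t}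
    (hsig : sig Vp S1 i = sig Vp S2 i + 1)
    (hs1 : shapeOf q Vp S1 = σ1) (hs2 : shapeOf q Vp S2 = σ2)
    (hne : σ1 i ≠ σ2 i) :
    Acond q Vp σ1 σ2 i ∧ (σ1 i = none → sig Vp S1 i = q) ∧
      (σ2 i = none → sig Vp S2 i = (Vp i).card - q) := by
  have h1 : shapeOf q Vp S1 i = σ1 i := congrFun hs1 i
  have h2 : shapeOf q Vp S2 i = σ2 i := congrFun hs2 i
  cases e1 : σ1 i with
  | none =>
    cases e2 : σ2 i with
    | none => exact absurd (e1.trans e2.symm) hne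
    | some b =>
      obtain ⟨hn1, hn2⟩ := shape_none (h1.trans e1)
      obtain ⟨r2, hnb⟩ := shape_some (h2.trans e2)
      have hb : b = q - 1 := by omega
      refine ⟨Or.inr (Or.inl ⟨e1, by rw [e2, hb]⟩), fun _ => by omega, fun h => by simp at h⟩
  | some a =>
    cases e2 : σ2 i with
    | none =>
      obtain ⟨r1, hna⟩ := shape_some (h1.trans e1)
      obtain ⟨hn1, hn2⟩ := shape_none (h2.trans e2)
      have ha : a = (Vp i).card - q + 1 := by omega
      refine ⟨Or.inr (Or.inr ⟨by rw [e1, ha], e2⟩), fun h => by simp at h, fun _ => by omega⟩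
    | some b =>
      have r1 := (shape_some (h1.trans e1)).1
      have r2 := (shape_some (h2.trans e2)).1
      exact ⟨Or.inl ⟨a, b, e1, e2, by omega⟩, fun h => by simp at h,
        fun h => by simp at h⟩

lemma Banalysis {q : ℕ} (hq : 1 ≤ q) {Vp : Fin t → Finset α} {σ1 σ2 : Fin t → Option ℕ}
    {S1 S2 : Finset α} {j : Fin t}
    (hsig : sig Vp S2 j = sig Vp S1 j + 1)
    (hs1 : shapeOf q Vp S1 = σ1) (hs2 : shapeOf q Vp S2 = σ2)
    (hne : σ1 j ≠ σ2 j) :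
    Bcond q Vp σ1 σ2 j ∧ (σ1 j = none → sig Vp S1 j = (Vp j).card - q) ∧
      (σ2 j = none → sig Vp S2 j = q) := by
  have h1 : shapeOf q Vp S1 j = σ1 j := congrFun hs1 j
  have h2 : shapeOf q Vp S2 j = σ2 j := congrFun hs2 j
  cases e1 : σ1 j with
  | none =>
    cases e2 : σ2 j with
    | none => exact absurd (e1.trans e2.symm) hne
    | some b =>
      obtain ⟨hn1, hn2⟩ := shape_none (h1.trans e1)
      obtain ⟨r2, hnb⟩ := shape_some (h2.trans e2)
      have hb : b = (Vp j).card - q + 1 := by omega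
      refine ⟨Or.inr (Or.inr ⟨by rw [e2, hb], e1⟩), fun _ => by omega, fun h => by simp at h⟩
  | some a =>
    cases e2 : σ2 j with
    | none =>
      obtain ⟨r1, hna⟩ := shape_some (h1.trans e1)
      obtain ⟨hn1, hn2⟩ := shape_none (h2.trans e2)
      have ha : a = q - 1 := by omega
      refine ⟨Or.inr (Or.inl ⟨e2, by rw [e1, ha]⟩), fun h => by simp at h, fun _ => by omega⟩
    | some b =>
      have r1 := (shape_some (h1.trans e1)).1
      have r2 := (shape_some (h2.trans e2)).1
      exact ⟨Or.inl ⟨a, b, e1, e2, by omega⟩, fun h => by simp at h,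
        fun h => by simp at h⟩

end Aux

/-- Two distinct `k`-feasible shapes are adjacent in the size-`k`
shape graph iff there exist sets `S1, S2` of cardinality `k`, both satisfying `P`,
with the respective shapes, such that `|S1 \ S2| = |S2 \ S1| = 1`. -/
theorem stmt1 {t q : ℕ} (hq : 1 ≤ q) (Vp : Fin t → Finset α)
    (hVp : IsTypePartition Vp) (P : Finset α → Prop) (hP : ShapeInvariant q Vp P)
    (k : ℕ) (σ1 σ2 : Fin t → Option ℕ) (hne : σ1 ≠ σ2)
    (h1 : KFeasible q Vp P k σ1) (h2 : KFeasible q Vp P k σ2) :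
    ShapeAdj q Vp k σ1 σ2 ↔
      ∃ S1 S2 : Finset α, P S1 ∧ P S2 ∧ S1.card = k ∧ S2.card = k ∧
        shapeOf q Vp S1 = σ1 ∧ shapeOf q Vp S2 = σ2 ∧
        (S1 \ S2).card = 1 ∧ (S2 \ S1).card = 1 := by
  classical
  constructor
  · -- forward direction
    intro hadj
    obtain ⟨X1, hX1c, hX1s, hPX1⟩ := h1
    obtain ⟨X2, hX2c, hX2s, hPX2⟩ := h2
    have key : ∀ S1 : Finset α, S1.card = k → shapeOf q Vp S1 = σ1 →
        (∃ T : Finset α, shapeOf q Vp T = σ2 ∧ T.card = S1.card ∧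
          (S1 \ T).card = 1 ∧ (T \ S1).card = 1) →
        ∃ S1' S2' : Finset α, P S1' ∧ P S2' ∧ S1'.card = k ∧ S2'.card = k ∧
          shapeOf q Vp S1' = σ1 ∧ shapeOf q Vp S2' = σ2 ∧
          (S1' \ S2').card = 1 ∧ (S2' \ S1').card = 1 := by
      rintro S1 hS1c hS1s ⟨T, hTs, hTc, hd1, hd2⟩
      exact ⟨S1, T, (hP S1 X1 (hS1s.trans hX1s.symm)).mpr hPX1,
        (hP T X2 (hTs.trans hX2s.symm)).mpr hPX2, hS1c, hTc.trans hS1c, hS1s, hTs, hd1, hd2⟩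
    rcases hadj with ⟨i, j, hij, hchar, hA, hB, ⟨S1, hS1c, hS1s, c2i, c2j⟩,
        ⟨S2, hS2c, hS2s, c3i, c3j⟩⟩ |
      ⟨i, hchar, hA, ⟨S1, hS1c, hS1s, c2i, -⟩, ⟨S2, hS2c, hS2s, c3i, -⟩⟩ |
      ⟨j, hchar, hB, ⟨S1, hS1c, hS1s, -, c2j⟩, ⟨S2, hS2c, hS2s, -, c3j⟩⟩
    · -- two-index case
      have hAi : sig Vp S1 i = sig Vp S2 i + 1 :=
        Asig hq hA hS1s hS2s (c2i i rfl) (c3i i rfl)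
      have hBj : sig Vp S2 j = sig Vp S1 j + 1 :=
        Bsig hq hB hS1s hS2s (c2j j rfl) (c3j j rfl)
      refine key S1 hS1c hS1s (build hVp hij ?_ (by omega) ?_ ?_ ?_)
      · intro h hhi hhj
        rw [hS1s]
        by_contra hc
        rcases (hchar h).mp hc with rfl | rfl
        · exact hhi rfl
        · exact hhj rfl
      · have := sig_le_card Vp S2 j
        omega
      · rw [show sig Vp S1 i - 1 = sig Vp S2 i by omega, ← shapeOf_eq]
        exact congrFun hS2s i
      · rw [show sig Vp S1 j + 1 = sig Vp S2 j by omega, ← shapeOf_eq]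
        exact congrFun hS2s j
    · -- A-only case
      have hAi : sig Vp S1 i = sig Vp S2 i + 1 :=
        Asig hq hA hS1s hS2s (c2i i rfl) (c3i i rfl)
      have hsum1 := Finset.sum_erase_add Finset.univ (sig Vp S1) (Finset.mem_univ i)
      have hsum2 := Finset.sum_erase_add Finset.univ (sig Vp S2) (Finset.mem_univ i)
      rw [sig_sum hVp S1, hS1c] at hsum1
      rw [sig_sum hVp S2, hS2c] at hsum2
      obtain ⟨m, hmmem, hlt⟩ := Finset.exists_lt_of_sum_lt
        (f := sig Vp S1) (g := sig Vp S2) (s := Finset.univ.erase i) (by omega)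
      have hmi : m ≠ i := (Finset.mem_erase.mp hmmem).1
      have hσm : σ1 m = σ2 m := by
        by_contra hc
        exact hmi ((hchar m).mp hc)
      have hnm : σ1 m = none := by
        cases e : σ1 m with
        | none => rfl
        | some a =>
          have r1 := (shape_some ((congrFun hS1s m).trans e)).1
          have r2 := (shape_some ((congrFun hS2s m).trans (hσm ▸ e))).1
          omega
      obtain ⟨hb1, hb2⟩ := shape_none ((congrFun hS1s m).trans hnm)
      obtain ⟨hb3, hb4⟩ := shape_none ((congrFun hS2s m).trans (hσm ▸ hnm))
      refine key S1 hS1c hS1s (build hVp (Ne.symm hmi) ?_ (by omega) ?_ ?_ ?_)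
      · intro h hhi hhm
        rw [hS1s]
        by_contra hc
        exact hhi ((hchar h).mp hc)
      · have := sig_le_card Vp S2 m
        omega
      · rw [show sig Vp S1 i - 1 = sig Vp S2 i by omega, ← shapeOf_eq]
        exact congrFun hS2s i
      · rw [← hσm, hnm, shapeVal, if_pos (by omega)]
    · -- B-only case
      have hBj : sig Vp S2 j = sig Vp S1 j + 1 :=
        Bsig hq hB hS1s hS2s (c2j j rfl) (c3j j rfl)
      have hsum1 := Finset.sum_erase_add Finset.univ (sig Vp S1) (Finset.mem_univ j)
      have hsum2 := Finset.sum_erase_add Finset.univ (sig Vp S2) (Finset.mem_univ j)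
      rw [sig_sum hVp S1, hS1c] at hsum1
      rw [sig_sum hVp S2, hS2c] at hsum2
      obtain ⟨m, hmmem, hlt⟩ := Finset.exists_lt_of_sum_lt
        (f := sig Vp S2) (g := sig Vp S1) (s := Finset.univ.erase j) (by omega)
      have hmj : m ≠ j := (Finset.mem_erase.mp hmmem).1
      have hσm : σ1 m = σ2 m := by
        by_contra hc
        exact hmj ((hchar m).mp hc)
      have hnm : σ1 m = none := by
        cases e : σ1 m with
        | none => rfl
        | some a =>
          have r1 := (shape_some ((congrFun hS1s m).trans e)).1
          have r2 := (shape_some ((congrFun hS2s m).trans (hσm ▸ e))).1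
          omega
      obtain ⟨hb1, hb2⟩ := shape_none ((congrFun hS1s m).trans hnm)
      obtain ⟨hb3, hb4⟩ := shape_none ((congrFun hS2s m).trans (hσm ▸ hnm))
      refine key S1 hS1c hS1s (build hVp hmj ?_ (by omega) ?_ ?_ ?_)
      · intro h hhm hhj
        rw [hS1s]
        by_contra hc
        exact hhj ((hchar h).mp hc)
      · have := sig_le_card Vp S2 j
        omega
      · rw [← hσm, hnm, shapeVal, if_pos (by omega)]
      · rw [show sig Vp S1 j + 1 = sig Vp S2 j by omega, ← shapeOf_eq]
        exact congrFun hS2s j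
  · -- reverse direction
    rintro ⟨S1, S2, hPS1, hPS2, hc1, hc2, hs1, hs2, hd1, hd2⟩
    obtain ⟨u, hu⟩ := Finset.card_eq_one.mp hd1
    obtain ⟨v, hv⟩ := Finset.card_eq_one.mp hd2
    have humem : u ∈ S1 ∧ u ∉ S2 := by
      have : u ∈ S1 \ S2 := hu ▸ Finset.mem_singleton_self u
      exact Finset.mem_sdiff.mp this
    have hvmem : v ∈ S2 ∧ v ∉ S1 := by
      have : v ∈ S2 \ S1 := hv ▸ Finset.mem_singleton_self v
      exact Finset.mem_sdiff.mp this
    have e1 : ∀ x, x ∈ S1 ∧ x ∉ S2 ↔ x = u := by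
      intro x
      rw [← Finset.mem_singleton, ← hu, Finset.mem_sdiff]
    have e2 : ∀ x, x ∈ S2 ∧ x ∉ S1 ↔ x = v := by
      intro x
      rw [← Finset.mem_singleton, ← hv, Finset.mem_sdiff]
    have hmemS2 : ∀ x, x ∈ S2 ↔ x = v ∨ (x ∈ S1 ∧ x ≠ u) := by
      intro x
      constructor
      · intro hx
        by_cases hx1 : x ∈ S1
        · refine Or.inr ⟨hx1, ?_⟩
          rintro rfl; exact humem.2 hx
        · exact Or.inl ((e2 x).mp ⟨hx, hx1⟩)
      · rintro (rfl | ⟨hx1, hxu⟩)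
        · exact hvmem.1
        · by_contra hx2
          exact hxu ((e1 x).mp ⟨hx1, hx2⟩)
    obtain ⟨i0, hui0⟩ := hVp.2.2 u
    obtain ⟨j0, hvj0⟩ := hVp.2.2 v
    obtain ⟨hout, hin, heq⟩ := sig_swap_s1 hVp hui0 hvj0 humem.1 hvmem.2 hmemS2
    have hagree : ∀ h, h ≠ i0 → h ≠ j0 → σ1 h = σ2 h := by
      intro h hhi hhj
      rw [← hs1, ← hs2, shapeOf_eq, shapeOf_eq, hout h hhi hhj]
    by_cases hij : i0 = j0
    · exfalso
      apply hne
      funext h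
      rw [← hs1, ← hs2, shapeOf_eq, shapeOf_eq, heq hij h]
    · obtain ⟨hsi, hsj⟩ := hin hij
      by_cases d1 : σ1 i0 = σ2 i0
      · by_cases d2 : σ1 j0 = σ2 j0
        · exfalso
          apply hne
          funext h
          by_cases hhi : h = i0
          · exact hhi ▸ d1
          · by_cases hhj : h = j0
            · exact hhj ▸ d2
            · exact hagree h hhi hhj
        · -- only j0 differs : B-only case
          obtain ⟨hB, cb2, cb3⟩ := Banalysis hq (by omega) hs1 hs2 d2
          refine Or.inr (Or.inr ⟨j0, ?_, hB, ?_, ?_⟩)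
          · intro h
            constructor
            · intro hc
              by_contra hhj
              by_cases hhi : h = i0
              · exact hc (hhi ▸ d1)
              · exact hc (hagree h hhi hhj)
            · rintro rfl; exact d2
          · exact ⟨S1, hc1, hs1, by simp, fun j' hj' hn => by
              cases hj'; exact cb2 hn⟩
          · exact ⟨S2, hc2, hs2, by simp, fun j' hj' hn => by
              cases hj'; exact cb3 hn⟩
      · obtain ⟨hA, ca2, ca3⟩ := Aanalysis hq (by omega) hs1 hs2 d1
        by_cases d2 : σ1 j0 = σ2 j0
        · -- only i0 differs : A-only case
          refine Or.inr (Or.inl ⟨i0, ?_, hA, ?_, ?_⟩)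
          · intro h
            constructor
            · intro hc
              by_contra hhi
              by_cases hhj : h = j0
              · exact hc (hhj ▸ d2)
              · exact hc (hagree h hhi hhj)
            · rintro rfl; exact d1
          · exact ⟨S1, hc1, hs1, fun i' hi' hn => by
              cases hi'; exact ca2 hn, by simp⟩
          · exact ⟨S2, hc2, hs2, fun i' hi' hn => by
              cases hi'; exact ca3 hn, by simp⟩
        · -- both differ : two-index case
          obtain ⟨hB, cb2, cb3⟩ := Banalysis hq (by omega) hs1 hs2 d2
          refine Or.inl ⟨i0, j0, hij, ?_, hA, hB, ?_, ?_⟩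
          · intro h
            constructor
            · intro hc
              by_contra hh
              push_neg at hh
              exact hc (hagree h hh.1 hh.2)
            · rintro (rfl | rfl)
              · exact d1
              · exact d2
          · exact ⟨S1, hc1, hs1,
              fun i' hi' hn => by cases hi'; exact ca2 hn,
              fun j' hj' hn => by cases hj'; exact cb2 hn⟩
          · exact ⟨S2, hc2, hs2,
              fun i' hi' hn => by cases hi'; exact ca3 hn,
              fun j' hj' hn => by cases hj'; exact cb3 hn⟩
end

section
/- Let P be a shape-invariant predicate on subsets of V, and let S, S' ⊆ V both satisfy P with |S| = |S'| = k, where both S and S' are unions of types (for every i ∈ {1,…,t}, either V_i ⊆ S or V_i ∩ S = ∅, and likewise for S'). Let σ̄ and σ̄' be the shapes of S and S'. Then there exists a TJ(P)-sequence from S to S' if and only if σ̄ and σ̄' belong to the same connected component of the size-k shape graph S_k. -/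
/-! Shapes framework: `V` is a finite type partitioned into types `Vp 0, …, Vp (t-1)`;
`q ≥ 1` is a fixed integer. A shape is a function `Fin t → Option ℕ`, where `none`
represents the symbol ⊤. -/

variable {α : Type*} [DecidableEq α] [Fintype α]

namespace Stmt2Aux
set_option linter.unusedSectionVars false
set_option linter.unusedVariables false

open Finset

variable {α : Type*} [DecidableEq α] [Fintype α] {t q : ℕ}

/-- pointwise shape function -/
def shp (q c n : ℕ) : Option ℕ := if q ≤ n ∧ n ≤ c - q then none else some n

lemma shapeOf_eq_shp (Vp : Fin t → Finset α) (X : Finset α) (i : Fin t) :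
    shapeOf q Vp X i = shp q (Vp i).card (sig Vp X i) := rfl

lemma shp_some {c n a : ℕ} (h : shp q c n = some a) :
    n = a ∧ ¬(q ≤ n ∧ n ≤ c - q) := by
  unfold shp at h; split at h <;> simp_all

lemma shp_none {c n : ℕ} (h : shp q c n = none) : q ≤ n ∧ n ≤ c - q := by
  unfold shp at h; split at h <;> simp_all

lemma shp_of_cond {c n : ℕ} (h : q ≤ n ∧ n ≤ c - q) : shp q c n = none := if_pos h

lemma shp_of_not_cond {c n : ℕ} (h : ¬(q ≤ n ∧ n ≤ c - q)) : shp q c n = some n := if_neg h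

lemma sig_le (Vp : Fin t → Finset α) (X : Finset α) (i : Fin t) :
    sig Vp X i ≤ (Vp i).card :=
  card_le_card inter_subset_left

noncomputable def typ (hVp : IsTypePartition (α := α) (t := t) Vp) (v : α) : Fin t :=
  (hVp.2.2 v).choose

lemma typ_mem {Vp : Fin t → Finset α} (hVp : IsTypePartition Vp) (v : α) :
    v ∈ Vp (typ hVp v) := (hVp.2.2 v).choose_spec

lemma typ_eq {Vp : Fin t → Finset α} (hVp : IsTypePartition Vp) {v : α} {i : Fin t}
    (h : v ∈ Vp i) : typ hVp v = i := by
  by_contra hne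
  simpa using (hVp.2.1 _ _ hne).le_bot (mem_inter.2 ⟨typ_mem hVp v, h⟩)

lemma mem_typ_iff {Vp : Fin t → Finset α} (hVp : IsTypePartition Vp) {v : α} {i : Fin t} :
    v ∈ Vp i ↔ typ hVp v = i :=
  ⟨typ_eq hVp, fun h => h ▸ typ_mem hVp v⟩

lemma card_eq_sum_sig {Vp : Fin t → Finset α} (hVp : IsTypePartition Vp) (X : Finset α) :
    X.card = ∑ i, sig Vp X i := by
  rw [Finset.card_eq_sum_card_fiberwise (f := typ hVp) (t := Finset.univ)
    (fun x _ => Finset.mem_univ _)]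
  refine Finset.sum_congr rfl fun i _ => ?_
  congr 1
  ext x
  simp only [mem_filter, mem_inter]
  constructor
  · rintro ⟨hx, rfl⟩; exact ⟨typ_mem hVp x, hx⟩
  · rintro ⟨h1, h2⟩; exact ⟨h2, typ_eq hVp h1⟩

section Move

variable {A : Finset α} {v w : α}

lemma sig_move_none {Vp : Fin t → Finset α} {h : Fin t}
    (hv : v ∉ Vp h) (hw : w ∉ Vp h) :
    sig Vp (insert w (A.erase v)) h = sig Vp A h := by
  unfold sig; congr 1; ext x
  simp only [mem_inter, mem_insert, mem_erase]
  constructor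
  · rintro ⟨hx, rfl | ⟨-, hxA⟩⟩
    · exact absurd hx hw
    · exact ⟨hx, hxA⟩
  · rintro ⟨hx, hxA⟩
    exact ⟨hx, Or.inr ⟨fun e => hv (e ▸ hx), hxA⟩⟩

lemma sig_move_sub {Vp : Fin t → Finset α} {h : Fin t}
    (hvA : v ∈ A) (hv : v ∈ Vp h) (hw : w ∉ Vp h) :
    sig Vp (insert w (A.erase v)) h + 1 = sig Vp A h := by
  have : Vp h ∩ insert w (A.erase v) = (Vp h ∩ A).erase v := by
    ext x
    simp only [mem_inter, mem_insert, mem_erase]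
    constructor
    · rintro ⟨hx, rfl | ⟨hxv, hxA⟩⟩
      · exact absurd hx hw
      · exact ⟨hxv, hx, hxA⟩
    · rintro ⟨hxv, hx, hxA⟩; exact ⟨hx, Or.inr ⟨hxv, hxA⟩⟩
  unfold sig
  rw [this, Finset.card_erase_add_one (mem_inter.2 ⟨hv, hvA⟩)]

lemma sig_move_add {Vp : Fin t → Finset α} {h : Fin t}
    (hwA : w ∉ A) (hv : v ∉ Vp h) (hw : w ∈ Vp h) :
    sig Vp (insert w (A.erase v)) h = sig Vp A h + 1 := by
  have : Vp h ∩ insert w (A.erase v) = insert w (Vp h ∩ A) := by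
    ext x
    simp only [mem_inter, mem_insert, mem_erase]
    constructor
    · rintro ⟨hx, rfl | ⟨hxv, hxA⟩⟩
      · exact Or.inl rfl
      · exact Or.inr ⟨hx, hxA⟩
    · rintro (rfl | ⟨hx, hxA⟩)
      · exact ⟨hw, Or.inl rfl⟩
      · exact ⟨hx, Or.inr ⟨fun e => hv (e ▸ hx), hxA⟩⟩
  unfold sig
  rw [this, Finset.card_insert_of_notMem (fun hx => hwA (mem_inter.1 hx).2)]

lemma sig_move_both {Vp : Fin t → Finset α} {h : Fin t}
    (hvA : v ∈ A) (hwA : w ∉ A) (hv : v ∈ Vp h) (hw : w ∈ Vp h) :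
    sig Vp (insert w (A.erase v)) h = sig Vp A h := by
  have : Vp h ∩ insert w (A.erase v) = insert w ((Vp h ∩ A).erase v) := by
    ext x
    simp only [mem_inter, mem_insert, mem_erase]
    constructor
    · rintro ⟨hx, rfl | ⟨hxv, hxA⟩⟩
      · exact Or.inl rfl
      · exact Or.inr ⟨hxv, hx, hxA⟩
    · rintro (rfl | ⟨hxv, hx, hxA⟩)
      · exact ⟨hw, Or.inl rfl⟩
      · exact ⟨hx, Or.inr ⟨hxv, hxA⟩⟩
  unfold sig
  rw [this, Finset.card_insert_of_notMem
    (fun hx => hwA (mem_inter.1 (Finset.erase_subset _ _ hx)).2),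
    Finset.card_erase_add_one (mem_inter.2 ⟨hv, hvA⟩)]

lemma card_move (hvA : v ∈ A) (hwA : w ∉ A) :
    (insert w (A.erase v)).card = A.card := by
  rw [Finset.card_insert_of_notMem (fun hx => hwA (Finset.erase_subset _ _ hx)),
    Finset.card_erase_add_one hvA]

lemma sdiff_move_left (hvA : v ∈ A) (hwA : w ∉ A) :
    A \ insert w (A.erase v) = {v} := by
  ext x
  simp only [mem_sdiff, mem_insert, mem_erase, mem_singleton]
  constructor
  · rintro ⟨hxA, hx⟩
    push_neg at hx
    rcases hx with ⟨hxw, hx⟩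
    by_contra hxv
    exact (hx hxv) hxA
  · rintro rfl
    refine ⟨hvA, ?_⟩
    push_neg
    exact ⟨fun e => hwA (e ▸ hvA), fun e => absurd rfl e⟩

lemma sdiff_move_right (hvA : v ∈ A) (hwA : w ∉ A) :
    insert w (A.erase v) \ A = {w} := by
  ext x
  simp only [mem_sdiff, mem_insert, mem_erase, mem_singleton]
  constructor
  · rintro ⟨rfl | ⟨hxv, hxA⟩, hx⟩
    · rfl
    · exact absurd hxA hx
  · rintro rfl
    exact ⟨Or.inl rfl, hwA⟩

end Move

section TJ

variable {P Q : Finset α → Prop}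

lemma TJSeq.mono (hPQ : ∀ X, Q X → P X) {s : ℕ → Finset α} {ℓ : ℕ} {S S' : Finset α}
    (h : TJSeq Q s ℓ S S') : TJSeq P s ℓ S S' :=
  ⟨h.1, h.2.1, fun i hi => hPQ _ (h.2.2.1 i hi), h.2.2.2⟩

lemma TJSeq.refl {S : Finset α} (hS : P S) : TJSeq P (fun _ => S) 0 S S :=
  ⟨rfl, rfl, fun _ _ => hS, fun i hi => absurd hi (Nat.not_lt_zero i)⟩

lemma TJSeq.single {A B : Finset α} (hA : P A) (hB : P B)
    (h1 : (A \ B).card = 1) (h2 : (B \ A).card = 1) :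
    TJSeq P (fun n => if n = 0 then A else B) 1 A B := by
  refine ⟨by simp, by simp, ?_, ?_⟩
  · intro i hi
    by_cases h : i = 0 <;> simp [h, hA, hB]
  · intro i hi
    interval_cases i
    simpa using ⟨h1, h2⟩

lemma TJSeq.append {s1 s2 : ℕ → Finset α} {ℓ1 ℓ2 : ℕ} {S A S' : Finset α}
    (h1 : TJSeq P s1 ℓ1 S A) (h2 : TJSeq P s2 ℓ2 A S') :
    TJSeq P (fun n => if n < ℓ1 then s1 n else s2 (n - ℓ1)) (ℓ1 + ℓ2) S S' := by
  obtain ⟨h10, h1e, h1P, h1m⟩ := h1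
  obtain ⟨h20, h2e, h2P, h2m⟩ := h2
  have key : ∀ n, ¬ n < ℓ1 → n ≤ ℓ1 + ℓ2 → s2 (n - ℓ1) = s2 (n - ℓ1) := fun _ _ _ => rfl
  refine ⟨?_, ?_, ?_, ?_⟩
  · by_cases h : 0 < ℓ1
    · simp [h, h10]
    · have hl : ℓ1 = 0 := by omega
      subst hl
      simp only [h, if_false, Nat.sub_zero]
      rw [h20, ← h1e]
      exact h10
  · have : ¬ ℓ1 + ℓ2 < ℓ1 := by omega
    simp only [this, if_false]
    rw [Nat.add_sub_cancel_left, h2e]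
  · intro i hi
    by_cases h : i < ℓ1
    · simp only [h, if_true]; exact h1P i (le_of_lt h)
    · simp only [h, if_false]; exact h2P _ (by omega)
  · intro i hi
    by_cases h : i < ℓ1
    · by_cases h' : i + 1 < ℓ1
      · simp only [h, h', if_true]; exact h1m i h
      · have hi1 : i + 1 = ℓ1 := by omega
        have e2 : (if i + 1 < ℓ1 then s1 (i+1) else s2 (i + 1 - ℓ1)) = s1 (i+1) := by
          rw [if_neg h', hi1, Nat.sub_self, h20, ← h1e]
        simp only [h, if_true, e2]
        exact h1m i h
    · have h' : ¬ i + 1 < ℓ1 := by omega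
      simp only [h, h', if_false]
      have : i + 1 - ℓ1 = (i - ℓ1) + 1 := by omega
      rw [this]
      exact h2m _ (by omega)

end TJ

lemma exists_gt_of_sum_lt {f g : Fin t → ℕ} (h : ∑ i, f i < ∑ i, g i) :
    ∃ i, f i < g i := by
  by_contra hc
  push_neg at hc
  exact absurd (Finset.sum_le_sum fun i _ => hc i) (not_le.2 h)

lemma not_mem_of_mem_other {Vp : Fin t → Finset α} (hVp : IsTypePartition Vp)
    {v : α} {i j : Fin t} (h : v ∈ Vp i) (hne : i ≠ j) : v ∉ Vp j :=
  fun h' => by simpa using (hVp.2.1 i j hne).le_bot (mem_inter.2 ⟨h, h'⟩)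

lemma sdiff_move_erase {X Y : Finset α} {v w : α} (hwY : w ∈ Y) :
    insert w (X.erase v) \ Y = (X \ Y).erase v := by
  ext x
  simp only [mem_sdiff, mem_insert, mem_erase]
  constructor
  · rintro ⟨rfl | ⟨hxv, hxX⟩, hxY⟩
    · exact absurd hwY hxY
    · exact ⟨hxv, hxX, hxY⟩
  · rintro ⟨hxv, hxX, hxY⟩
    exact ⟨Or.inr ⟨hxv, hxX⟩, hxY⟩

lemma within {Vp : Fin t → Finset α} (hVp : IsTypePartition Vp) :
    ∀ (n : ℕ) (X Y : Finset α), (X \ Y).card = n → X.card = Y.card →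
      shapeOf q Vp X = shapeOf q Vp Y →
      ∃ s ℓ, TJSeq (fun Z => shapeOf q Vp Z = shapeOf q Vp Y ∧ Z.card = Y.card) s ℓ X Y := by
  intro n
  induction n with
  | zero =>
    intro X Y hd hc hs
    have hXY : X = Y := Finset.eq_of_subset_of_card_le
      (by rwa [← Finset.sdiff_eq_empty_iff_subset, ← Finset.card_eq_zero]) hc.ge
    subst hXY
    exact ⟨_, 0, TJSeq.refl ⟨hs, hc⟩⟩
  | succ n ih =>
    intro X Y hd hc hs
    -- find a swap (v out, w in) preserving the shape
    suffices hvw : ∃ v w, v ∈ X ∧ v ∉ Y ∧ w ∉ X ∧ w ∈ Y ∧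
        shapeOf q Vp (insert w (X.erase v)) = shapeOf q Vp X by
      obtain ⟨v, w, hvX, hvY, hwX, hwY, hsh'⟩ := hvw
      set X' := insert w (X.erase v) with hX'
      have hcard' : X'.card = X.card := card_move hvX hwX
      have hd' : (X' \ Y).card = n := by
        rw [hX', sdiff_move_erase hwY, Finset.card_erase_of_mem (mem_sdiff.2 ⟨hvX, hvY⟩), hd]
        omega
      obtain ⟨s2, ℓ2, hs2⟩ := ih X' Y hd' (hcard'.trans hc) (hsh'.trans hs)
      have hstep : TJSeq (fun Z => shapeOf q Vp Z = shapeOf q Vp Y ∧ Z.card = Y.card)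
          (fun n => if n = 0 then X else X') 1 X X' :=
        TJSeq.single ⟨hs, hc⟩ ⟨hsh'.trans hs, hcard'.trans hc⟩
          (by rw [hX', sdiff_move_left hvX hwX, Finset.card_singleton])
          (by rw [hX', sdiff_move_right hvX hwX, Finset.card_singleton])
      exact ⟨_, 1 + ℓ2, TJSeq.append hstep hs2⟩
    by_cases hsig : ∀ i, sig Vp X i = sig Vp Y i
    · -- signatures agree; swap within a single type
      have hXY : X ≠ Y := by
        intro e
        rw [e, Finset.sdiff_self, Finset.card_empty] at hd
        omega
      have hex : ∃ i, Vp i ∩ X ≠ Vp i ∩ Y := by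
        by_contra hall
        push_neg at hall
        apply hXY
        ext x
        constructor
        · intro hx
          have := hall (typ hVp x)
          have hx' : x ∈ Vp (typ hVp x) ∩ Y := this ▸ mem_inter.2 ⟨typ_mem hVp x, hx⟩
          exact (mem_inter.1 hx').2
        · intro hx
          have := hall (typ hVp x)
          have hx' : x ∈ Vp (typ hVp x) ∩ X := this.symm ▸ mem_inter.2 ⟨typ_mem hVp x, hx⟩
          exact (mem_inter.1 hx').2
      obtain ⟨i, hi⟩ := hex
      have hne1 : ((Vp i ∩ X) \ (Vp i ∩ Y)).Nonempty := by
        rw [Finset.nonempty_iff_ne_empty]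
        intro he
        exact hi (Finset.eq_of_subset_of_card_le (Finset.sdiff_eq_empty_iff_subset.1 he)
          (hsig i).ge)
      have hne2 : ((Vp i ∩ Y) \ (Vp i ∩ X)).Nonempty := by
        rw [Finset.nonempty_iff_ne_empty]
        intro he
        exact hi ((Finset.eq_of_subset_of_card_le (Finset.sdiff_eq_empty_iff_subset.1 he)
          (hsig i).le).symm)
      obtain ⟨v, hv⟩ := hne1
      obtain ⟨w, hw⟩ := hne2
      rw [mem_sdiff, mem_inter] at hv hw
      have hvY : v ∉ Y := fun h => hv.2 (mem_inter.2 ⟨hv.1.1, h⟩)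
      have hwX : w ∉ X := fun h => hw.2 (mem_inter.2 ⟨hw.1.1, h⟩)
      refine ⟨v, w, hv.1.2, hvY, hwX, hw.1.2, funext fun h => ?_⟩
      rw [shapeOf_eq_shp, shapeOf_eq_shp]
      congr 1
      by_cases hh : h = i
      · subst hh
        exact sig_move_both hv.1.2 hwX hv.1.1 hw.1.1
      · exact sig_move_none (not_mem_of_mem_other hVp hv.1.1 (fun e => hh e.symm))
          (not_mem_of_mem_other hVp hw.1.1 (fun e => hh e.symm))
    · -- signatures differ; move a token between two ⊤ types
      push_neg at hsig
      have hsum : ∑ h, sig Vp X h = ∑ h, sig Vp Y h := by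
        rw [← card_eq_sum_sig hVp, ← card_eq_sum_sig hVp, hc]
      have hexi : ∃ i, sig Vp Y i < sig Vp X i := by
        by_contra hc'
        push_neg at hc'
        obtain ⟨i0, hi0⟩ := hsig
        have := Finset.sum_lt_sum (f := sig Vp X) (g := sig Vp Y)
          (fun i _ => hc' i) ⟨i0, Finset.mem_univ _, lt_of_le_of_ne (hc' i0) hi0⟩
        omega
      have hexj : ∃ j, sig Vp X j < sig Vp Y j := by
        by_contra hc'
        push_neg at hc'
        obtain ⟨i0, hi0⟩ := hsig
        have := Finset.sum_lt_sum (f := sig Vp Y) (g := sig Vp X)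
          (fun i _ => hc' i) ⟨i0, Finset.mem_univ _, lt_of_le_of_ne (hc' i0) (Ne.symm hi0)⟩
        omega
      obtain ⟨i, hi⟩ := hexi
      obtain ⟨j, hj⟩ := hexj
      have hij : i ≠ j := fun e => by rw [e] at hi; omega
      have hnonei : shapeOf q Vp X i = none := by
        by_contra h'
        obtain ⟨a, ha⟩ : ∃ a, shapeOf q Vp X i = some a := by
          cases h'' : shapeOf q Vp X i with
          | none => exact absurd h'' h'
          | some a => exact ⟨a, rfl⟩
        have hb : shapeOf q Vp Y i = some a := (congrFun hs i).symm.trans ha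
        rw [shapeOf_eq_shp] at ha hb
        have := (shp_some ha).1
        have := (shp_some hb).1
        omega
      have hnonej : shapeOf q Vp X j = none := by
        by_contra h'
        obtain ⟨a, ha⟩ : ∃ a, shapeOf q Vp X j = some a := by
          cases h'' : shapeOf q Vp X j with
          | none => exact absurd h'' h'
          | some a => exact ⟨a, rfl⟩
        have hb : shapeOf q Vp Y j = some a := (congrFun hs j).symm.trans ha
        rw [shapeOf_eq_shp] at ha hb
        have := (shp_some ha).1
        have := (shp_some hb).1
        omega
      have hXi := shp_none (q := q) ((shapeOf_eq_shp Vp X i).symm.trans hnonei)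
      have hXj := shp_none (q := q) ((shapeOf_eq_shp Vp X j).symm.trans hnonej)
      have hYi := shp_none (q := q) ((shapeOf_eq_shp Vp Y i).symm.trans
        ((congrFun hs i).symm.trans hnonei))
      have hYj := shp_none (q := q) ((shapeOf_eq_shp Vp Y j).symm.trans
        ((congrFun hs j).symm.trans hnonej))
      have hne1 : ((Vp i ∩ X) \ Y).Nonempty := by
        rw [Finset.nonempty_iff_ne_empty]
        intro he
        have hsub : Vp i ∩ X ⊆ Vp i ∩ Y := fun x hx => mem_inter.2
          ⟨(mem_inter.1 hx).1, Finset.sdiff_eq_empty_iff_subset.1 he hx⟩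
        exact absurd (card_le_card hsub) (by unfold sig at hi; omega)
      have hne2 : ((Vp j ∩ Y) \ X).Nonempty := by
        rw [Finset.nonempty_iff_ne_empty]
        intro he
        have hsub : Vp j ∩ Y ⊆ Vp j ∩ X := fun x hx => mem_inter.2
          ⟨(mem_inter.1 hx).1, Finset.sdiff_eq_empty_iff_subset.1 he hx⟩
        exact absurd (card_le_card hsub) (by unfold sig at hj; omega)
      obtain ⟨v, hv⟩ := hne1
      obtain ⟨w, hw⟩ := hne2
      rw [mem_sdiff, mem_inter] at hv hw
      refine ⟨v, w, hv.1.2, hv.2, hw.2, hw.1.2, funext fun h => ?_⟩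
      have hvj : v ∉ Vp j := not_mem_of_mem_other hVp hv.1.1 hij
      have hwi : w ∉ Vp i := not_mem_of_mem_other hVp hw.1.1 (Ne.symm hij)
      by_cases hhi : h = i
      · subst hhi
        have hsub := sig_move_sub (Vp := Vp) (h := h) hv.1.2 hv.1.1 hwi
        rw [shapeOf_eq_shp, shp_of_cond (by omega), hnonei]
      · by_cases hhj : h = j
        · subst hhj
          have hadd := sig_move_add (Vp := Vp) (h := h) hw.2 hvj hw.1.1
          rw [shapeOf_eq_shp, shp_of_cond (by omega), hnonej]
        · rw [shapeOf_eq_shp, shapeOf_eq_shp]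
          congr 1
          exact sig_move_none (not_mem_of_mem_other hVp hv.1.1 (fun e => hhi e.symm))
            (not_mem_of_mem_other hVp hw.1.1 (fun e => hhj e.symm))

section AB

variable {Vp : Fin t → Finset α} {σ1 σ2 : Fin t → Option ℕ}

lemma Aside (hq : 1 ≤ q) {i : Fin t} (hA : Acond q Vp σ1 σ2 i) {n1 n2 c : ℕ}
    (hc : c = (Vp i).card)
    (h1 : shp q c n1 = σ1 i) (h2 : shp q c n2 = σ2 i)
    (hc2 : σ1 i = none → n1 = q) (hc3 : σ2 i = none → n2 = c - q) :
    n1 = n2 + 1 ∧ shp q c (n1 - 1) = σ2 i := by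
  rcases hA with ⟨a, b, ha, hb, hab⟩ | ⟨ha, hb⟩ | ⟨ha, hb⟩
  · rw [ha] at h1
    rw [hb] at h2
    obtain ⟨e1, -⟩ := shp_some h1
    obtain ⟨e2, -⟩ := shp_some h2
    have hn : n1 = n2 + 1 := by omega
    refine ⟨hn, ?_⟩
    rw [hb, show n1 - 1 = n2 by omega]
    exact h2
  · have e1 : n1 = q := hc2 ha
    rw [hb] at h2
    obtain ⟨e2, -⟩ := shp_some h2
    have hn : n1 = n2 + 1 := by omega
    refine ⟨hn, ?_⟩
    rw [hb, show n1 - 1 = n2 by omega]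
    exact h2
  · rw [← hc] at ha
    rw [ha] at h1
    obtain ⟨e1, -⟩ := shp_some h1
    have e2 : n2 = c - q := hc3 hb
    rw [hb] at h2
    obtain ⟨g1, g2⟩ := shp_none h2
    have hn : n1 = n2 + 1 := by omega
    refine ⟨hn, ?_⟩
    rw [hb, show n1 - 1 = n2 by omega]
    exact h2

lemma Bside (hq : 1 ≤ q) {j : Fin t} (hB : Bcond q Vp σ1 σ2 j) {n1 n2 c : ℕ}
    (hc : c = (Vp j).card)
    (h1 : shp q c n1 = σ1 j) (h2 : shp q c n2 = σ2 j)
    (hc2 : σ1 j = none → n1 = c - q) (hc3 : σ2 j = none → n2 = q) :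
    n2 = n1 + 1 ∧ shp q c (n1 + 1) = σ2 j := by
  rcases hB with ⟨a, b, ha, hb, hab⟩ | ⟨hb, ha⟩ | ⟨hb, ha⟩
  · rw [ha] at h1
    rw [hb] at h2
    obtain ⟨e1, -⟩ := shp_some h1
    obtain ⟨e2, -⟩ := shp_some h2
    have hn : n2 = n1 + 1 := by omega
    refine ⟨hn, ?_⟩
    rw [hb, show n1 + 1 = n2 by omega]
    exact h2
  · rw [ha] at h1
    obtain ⟨e1, -⟩ := shp_some h1
    have e2 : n2 = q := hc3 hb
    rw [hb] at h2
    obtain ⟨g1, g2⟩ := shp_none h2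
    have hn : n2 = n1 + 1 := by omega
    refine ⟨hn, ?_⟩
    rw [hb, show n1 + 1 = n2 by omega]
    exact h2
  · rw [← hc] at hb
    have e1 : n1 = c - q := hc2 ha
    rw [hb] at h2
    obtain ⟨e2, -⟩ := shp_some h2
    have hn : n2 = n1 + 1 := by omega
    refine ⟨hn, ?_⟩
    rw [hb, show n1 + 1 = n2 by omega]
    exact h2

lemma compensate {f g : Fin t → ℕ} {i : Fin t} (hsum : ∑ h, f h = ∑ h, g h)
    (hi : f i = g i + 1) : ∃ h, h ≠ i ∧ f h < g h := by
  by_contra hc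
  push_neg at hc
  have hle : ∀ h ∈ Finset.univ, g h ≤ f h := by
    intro h _
    by_cases hh : h = i
    · subst hh; omega
    · exact le_of_not_gt (by simpa using hc h hh)
  have := Finset.sum_lt_sum hle ⟨i, Finset.mem_univ i, by omega⟩
  omega

end AB

lemma move_exists {Vp : Fin t → Finset α} (hVp : IsTypePartition Vp) {i j : Fin t}
    (hij : i ≠ j) (S1 : Finset α) (hge : 1 ≤ sig Vp S1 i)
    (hlt : sig Vp S1 j < (Vp j).card) :
    ∃ Y : Finset α, (S1 \ Y).card = 1 ∧ (Y \ S1).card = 1 ∧ Y.card = S1.card ∧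
      sig Vp Y i + 1 = sig Vp S1 i ∧ sig Vp Y j = sig Vp S1 j + 1 ∧
      ∀ h, h ≠ i → h ≠ j → sig Vp Y h = sig Vp S1 h := by
  have hv : (Vp i ∩ S1).Nonempty := Finset.card_pos.1 (by unfold sig at hge; omega)
  have hw : (Vp j \ S1).Nonempty := by
    rw [Finset.nonempty_iff_ne_empty]
    intro he
    have hsub : Vp j ⊆ S1 := Finset.sdiff_eq_empty_iff_subset.1 he
    have he2 : Vp j ∩ S1 = Vp j := Finset.inter_eq_left.2 hsub
    unfold sig at hlt
    rw [he2] at hlt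
    exact lt_irrefl _ hlt
  obtain ⟨v, hv⟩ := hv
  obtain ⟨w, hw⟩ := hw
  rw [mem_inter] at hv
  rw [mem_sdiff] at hw
  have hvj : v ∉ Vp j := not_mem_of_mem_other hVp hv.1 hij
  have hwi : w ∉ Vp i := not_mem_of_mem_other hVp hw.1 (Ne.symm hij)
  refine ⟨insert w (S1.erase v), ?_, ?_, card_move hv.2 hw.2, ?_, ?_, ?_⟩
  · rw [sdiff_move_left hv.2 hw.2, Finset.card_singleton]
  · rw [sdiff_move_right hv.2 hw.2, Finset.card_singleton]
  · exact sig_move_sub hv.2 hv.1 hwi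
  · exact sig_move_add hw.2 hvj hw.1
  · intro h hhi hhj
    exact sig_move_none (not_mem_of_mem_other hVp hv.1 (fun e => hhi e.symm))
      (not_mem_of_mem_other hVp hw.1 (fun e => hhj e.symm))

lemma build_step {Vp : Fin t → Finset α} (hVp : IsTypePartition Vp)
    {P : Finset α → Prop} (hP : ShapeInvariant q Vp P) {k : ℕ} {σ1 σ2 : Fin t → Option ℕ}
    (hK2 : KFeasible q Vp P k σ2)
    (S1 : Finset α) (hS1c : S1.card = k) (hS1s : shapeOf q Vp S1 = σ1)
    {i' j' : Fin t} (hij : i' ≠ j')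
    (hge : 1 ≤ sig Vp S1 i') (hlt : sig Vp S1 j' < (Vp j').card)
    (hshi : shp q (Vp i').card (sig Vp S1 i' - 1) = σ2 i')
    (hshj : shp q (Vp j').card (sig Vp S1 j' + 1) = σ2 j')
    (hother : ∀ h, h ≠ i' → h ≠ j' → σ1 h = σ2 h)
    (X : Finset α) (hX : P X) (hXc : X.card = k) (hXs : shapeOf q Vp X = σ1) :
    ∃ s ℓ Y, TJSeq P s ℓ X Y ∧ P Y ∧ Y.card = k ∧ shapeOf q Vp Y = σ2 := by
  obtain ⟨Y, hd1, hd2, hYc, hsi, hsj, hsoth⟩ := move_exists hVp hij S1 hge hlt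
  have hYs : shapeOf q Vp Y = σ2 := by
    funext h
    rw [shapeOf_eq_shp]
    by_cases hhi : h = i'
    · subst hhi
      rw [show sig Vp Y h = sig Vp S1 h - 1 by omega]
      exact hshi
    · by_cases hhj : h = j'
      · subst hhj
        rw [hsj]
        exact hshj
      · rw [hsoth h hhi hhj, ← hother h hhi hhj, ← hS1s, shapeOf_eq_shp]
  have hPS1 : P S1 := (hP S1 X (hS1s.trans hXs.symm)).2 hX
  obtain ⟨W, hWc, hWs, hWP⟩ := hK2
  have hPY : P Y := (hP Y W (hYs.trans hWs.symm)).2 hWP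
  obtain ⟨s0, ℓ0, hs0⟩ := within hVp (X \ S1).card X S1 rfl (hXc.trans hS1c.symm)
    (hXs.trans hS1s.symm)
  have hs0P : TJSeq P s0 ℓ0 X S1 := by
    refine TJSeq.mono (fun Z hZ => ?_) hs0
    exact (hP Z X (hZ.1.trans (hS1s.trans hXs.symm))).2 hX
  have hstep : TJSeq P (fun n => if n = 0 then S1 else Y) 1 S1 Y :=
    TJSeq.single hPS1 hPY hd1 hd2
  exact ⟨_, ℓ0 + 1, Y, TJSeq.append hs0P hstep, hPY, hYc.trans hS1c, hYs⟩

lemma step_of_adj {Vp : Fin t → Finset α} (hq : 1 ≤ q) (hVp : IsTypePartition Vp)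
    {P : Finset α → Prop} (hP : ShapeInvariant q Vp P) {k : ℕ} {σ1 σ2 : Fin t → Option ℕ}
    (hadj : GraphAdj q Vp P k σ1 σ2)
    (X : Finset α) (hX : P X) (hXc : X.card = k) (hXs : shapeOf q Vp X = σ1) :
    ∃ s ℓ Y, TJSeq P s ℓ X Y ∧ P Y ∧ Y.card = k ∧ shapeOf q Vp Y = σ2 := by
  obtain ⟨hne, hK1, hK2, hSA⟩ := hadj
  rcases hSA with ⟨i, j, hij, hiff, hA, hB, hC2, hC3⟩ | ⟨i, hiff, hA, hC2, hC3⟩ |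
    ⟨j, hiff, hB, hC2, hC3⟩
  · obtain ⟨S1, hS1c, hS1s, hS1i, hS1j⟩ := hC2
    obtain ⟨S2, hS2c, hS2s, hS2i, hS2j⟩ := hC3
    have h1i : shp q (Vp i).card (sig Vp S1 i) = σ1 i := by rw [← shapeOf_eq_shp, hS1s]
    have h2i : shp q (Vp i).card (sig Vp S2 i) = σ2 i := by rw [← shapeOf_eq_shp, hS2s]
    obtain ⟨hAi, hAsh⟩ := Aside hq hA rfl h1i h2i (hS1i i rfl) (hS2i i rfl)
    have h1j : shp q (Vp j).card (sig Vp S1 j) = σ1 j := by rw [← shapeOf_eq_shp, hS1s]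
    have h2j : shp q (Vp j).card (sig Vp S2 j) = σ2 j := by rw [← shapeOf_eq_shp, hS2s]
    obtain ⟨hBj, hBsh⟩ := Bside hq hB rfl h1j h2j (hS1j j rfl) (hS2j j rfl)
    have hlt : sig Vp S1 j < (Vp j).card := by
      have := sig_le Vp S2 j
      omega
    refine build_step hVp hP hK2 S1 hS1c hS1s hij (by omega) hlt hAsh hBsh ?_ X hX hXc hXs
    intro h hhi hhj
    by_contra hne'
    rcases (hiff h).1 hne' with rfl | rfl
    · exact hhi rfl
    · exact hhj rfl
  · obtain ⟨S1, hS1c, hS1s, hS1i, -⟩ := hC2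
    obtain ⟨S2, hS2c, hS2s, hS2i, -⟩ := hC3
    have h1i : shp q (Vp i).card (sig Vp S1 i) = σ1 i := by rw [← shapeOf_eq_shp, hS1s]
    have h2i : shp q (Vp i).card (sig Vp S2 i) = σ2 i := by rw [← shapeOf_eq_shp, hS2s]
    obtain ⟨hAi, hAsh⟩ := Aside hq hA rfl h1i h2i (hS1i i rfl) (hS2i i rfl)
    have hsum : ∑ h, sig Vp S1 h = ∑ h, sig Vp S2 h := by
      rw [← card_eq_sum_sig hVp, ← card_eq_sum_sig hVp, hS1c, hS2c]
    obtain ⟨j, hji, hjlt⟩ := compensate hsum hAi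
    have hoth : ∀ h, h ≠ i → σ1 h = σ2 h := fun h hh => by
      by_contra hne'
      exact hh ((hiff h).1 hne')
    have hσj : σ1 j = σ2 j := hoth j hji
    have h1j : shp q (Vp j).card (sig Vp S1 j) = σ1 j := by rw [← shapeOf_eq_shp, hS1s]
    have h2j : shp q (Vp j).card (sig Vp S2 j) = σ2 j := by rw [← shapeOf_eq_shp, hS2s]
    have hnone : σ1 j = none := by
      cases hcs : σ1 j with
      | none => rfl
      | some a =>
        rw [hcs] at h1j
        rw [hσj] at hcs
        rw [hcs] at h2j
        have := (shp_some h1j).1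
        have := (shp_some h2j).1
        omega
    rw [hnone] at h1j
    have g1 := shp_none h1j
    rw [← hσj, hnone] at h2j
    have g2 := shp_none h2j
    have hshj : shp q (Vp j).card (sig Vp S1 j + 1) = σ2 j := by
      rw [← hσj, hnone]
      exact shp_of_cond ⟨by omega, by omega⟩
    have hlt : sig Vp S1 j < (Vp j).card := by
      have := sig_le Vp S2 j
      omega
    refine build_step hVp hP hK2 S1 hS1c hS1s (Ne.symm hji) (by omega) hlt hAsh hshj
      ?_ X hX hXc hXs
    exact fun h hhi _ => hoth h hhi
  · obtain ⟨S1, hS1c, hS1s, -, hS1j⟩ := hC2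
    obtain ⟨S2, hS2c, hS2s, -, hS2j⟩ := hC3
    have h1j : shp q (Vp j).card (sig Vp S1 j) = σ1 j := by rw [← shapeOf_eq_shp, hS1s]
    have h2j : shp q (Vp j).card (sig Vp S2 j) = σ2 j := by rw [← shapeOf_eq_shp, hS2s]
    obtain ⟨hBj, hBsh⟩ := Bside hq hB rfl h1j h2j (hS1j j rfl) (hS2j j rfl)
    have hsum : ∑ h, sig Vp S2 h = ∑ h, sig Vp S1 h := by
      rw [← card_eq_sum_sig hVp, ← card_eq_sum_sig hVp, hS1c, hS2c]
    obtain ⟨i, hijne, hilt⟩ := compensate hsum hBj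
    have hoth : ∀ h, h ≠ j → σ1 h = σ2 h := fun h hh => by
      by_contra hne'
      exact hh ((hiff h).1 hne')
    have hσi : σ1 i = σ2 i := hoth i hijne
    have h1i : shp q (Vp i).card (sig Vp S1 i) = σ1 i := by rw [← shapeOf_eq_shp, hS1s]
    have h2i : shp q (Vp i).card (sig Vp S2 i) = σ2 i := by rw [← shapeOf_eq_shp, hS2s]
    have hnone : σ1 i = none := by
      cases hcs : σ1 i with
      | none => rfl
      | some a =>
        rw [hcs] at h1i
        rw [hσi] at hcs
        rw [hcs] at h2i
        have := (shp_some h1i).1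
        have := (shp_some h2i).1
        omega
    rw [hnone] at h1i
    have g1 := shp_none h1i
    rw [← hσi, hnone] at h2i
    have g2 := shp_none h2i
    have hshi : shp q (Vp i).card (sig Vp S1 i - 1) = σ2 i := by
      rw [← hσi, hnone]
      exact shp_of_cond ⟨by omega, by omega⟩
    have hlt : sig Vp S1 j < (Vp j).card := by
      have := sig_le Vp S2 j
      omega
    exact build_step hVp hP hK2 S1 hS1c hS1s hijne (by omega) hlt hshi hBsh
      (fun h _ hhj => hoth h hhj) X hX hXc hXs

lemma Arecover (hq : 1 ≤ q) {c n : ℕ} (hn : 1 ≤ n) (hnc : n ≤ c)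
    (hne : shp q c n ≠ shp q c (n - 1)) :
    ((∃ a b, shp q c n = some a ∧ shp q c (n - 1) = some b ∧ b + 1 = a) ∨
     (shp q c n = none ∧ shp q c (n - 1) = some (q - 1)) ∨
     (shp q c n = some (c - q + 1) ∧ shp q c (n - 1) = none)) ∧
    (shp q c n = none → n = q) ∧ (shp q c (n - 1) = none → n - 1 = c - q) := by
  by_cases c1 : q ≤ n ∧ n ≤ c - q <;> by_cases c2 : q ≤ n - 1 ∧ n - 1 ≤ c - q
  · rw [shp_of_cond c1, shp_of_cond c2] at hne
    exact absurd rfl hne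
  · refine ⟨Or.inr (Or.inl ⟨shp_of_cond c1, ?_⟩), fun _ => by omega, fun h => ?_⟩
    · rw [shp_of_not_cond c2]
      exact congrArg some (by omega)
    · rw [shp_of_not_cond c2] at h
      exact absurd h (by simp)
  · refine ⟨Or.inr (Or.inr ⟨?_, shp_of_cond c2⟩), fun h => ?_, fun _ => by omega⟩
    · rw [shp_of_not_cond c1]
      exact congrArg some (by omega)
    · rw [shp_of_not_cond c1] at h
      exact absurd h (by simp)
  · refine ⟨Or.inl ⟨n, n - 1, shp_of_not_cond c1, shp_of_not_cond c2, by omega⟩,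
      fun h => ?_, fun h => ?_⟩
    · rw [shp_of_not_cond c1] at h
      exact absurd h (by simp)
    · rw [shp_of_not_cond c2] at h
      exact absurd h (by simp)

lemma Brecover (hq : 1 ≤ q) {c m : ℕ} (hm : m + 1 ≤ c)
    (hne : shp q c m ≠ shp q c (m + 1)) :
    ((∃ a b, shp q c m = some a ∧ shp q c (m + 1) = some b ∧ a + 1 = b) ∨
     (shp q c (m + 1) = none ∧ shp q c m = some (q - 1)) ∨
     (shp q c (m + 1) = some (c - q + 1) ∧ shp q c m = none)) ∧
    (shp q c m = none → m = c - q) ∧ (shp q c (m + 1) = none → m + 1 = q) := by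
  by_cases c1 : q ≤ m ∧ m ≤ c - q <;> by_cases c2 : q ≤ m + 1 ∧ m + 1 ≤ c - q
  · rw [shp_of_cond c1, shp_of_cond c2] at hne
    exact absurd rfl hne
  · refine ⟨Or.inr (Or.inr ⟨?_, shp_of_cond c1⟩), fun _ => by omega, fun h => ?_⟩
    · rw [shp_of_not_cond c2]
      exact congrArg some (by omega)
    · rw [shp_of_not_cond c2] at h
      exact absurd h (by simp)
  · refine ⟨Or.inr (Or.inl ⟨shp_of_cond c2, ?_⟩), fun h => ?_, fun _ => by omega⟩
    · rw [shp_of_not_cond c1]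
      exact congrArg some (by omega)
    · rw [shp_of_not_cond c1] at h
      exact absurd h (by simp)
  · refine ⟨Or.inl ⟨m, m + 1, shp_of_not_cond c1, shp_of_not_cond c2, rfl⟩,
      fun h => ?_, fun h => ?_⟩
    · rw [shp_of_not_cond c1] at h
      exact absurd h (by simp)
    · rw [shp_of_not_cond c2] at h
      exact absurd h (by simp)

lemma adj_of_move {Vp : Fin t → Finset α} (hq : 1 ≤ q) (hVp : IsTypePartition Vp)
    {P : Finset α → Prop} {k : ℕ} (A B : Finset α) (hPA : P A) (hPB : P B)
    (hAc : A.card = k) (hBc : B.card = k)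
    (h1 : (A \ B).card = 1) (h2 : (B \ A).card = 1) :
    Relation.ReflTransGen (GraphAdj q Vp P k) (shapeOf q Vp A) (shapeOf q Vp B) := by
  obtain ⟨v, hv⟩ := Finset.card_eq_one.1 h1
  obtain ⟨w, hw⟩ := Finset.card_eq_one.1 h2
  have hvA : v ∈ A ∧ v ∉ B := by
    have : v ∈ A \ B := hv ▸ Finset.mem_singleton_self v
    exact ⟨(mem_sdiff.1 this).1, (mem_sdiff.1 this).2⟩
  have hwB : w ∈ B ∧ w ∉ A := by
    have : w ∈ B \ A := hw ▸ Finset.mem_singleton_self w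
    exact ⟨(mem_sdiff.1 this).1, (mem_sdiff.1 this).2⟩
  have hBeq : B = insert w (A.erase v) := by
    ext x
    simp only [mem_insert, mem_erase]
    constructor
    · intro hxB
      by_cases hxA : x ∈ A
      · refine Or.inr ⟨fun e => hvA.2 (e ▸ hxB), hxA⟩
      · have : x ∈ B \ A := mem_sdiff.2 ⟨hxB, hxA⟩
        rw [hw, mem_singleton] at this
        exact Or.inl this
    · rintro (rfl | ⟨hxv, hxA⟩)
      · exact hwB.1
      · by_contra hxB
        have : x ∈ A \ B := mem_sdiff.2 ⟨hxA, hxB⟩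
        rw [hv, mem_singleton] at this
        exact hxv this
  set i := typ hVp v with hidef
  set j := typ hVp w with hjdef
  have hvi : v ∈ Vp i := typ_mem hVp v
  have hwj : w ∈ Vp j := typ_mem hVp w
  by_cases hij : i = j
  · have hsig : ∀ h, sig Vp B h = sig Vp A h := by
      intro h
      rw [hBeq]
      by_cases hh : h = i
      · subst hh
        exact sig_move_both hvA.1 hwB.2 hvi (hij ▸ hwj)
      · exact sig_move_none (not_mem_of_mem_other hVp hvi (fun e => hh e.symm))
          (not_mem_of_mem_other hVp hwj (fun e => hh (hij ▸ e.symm)))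
    have : shapeOf q Vp B = shapeOf q Vp A := by
      funext h
      rw [shapeOf_eq_shp, shapeOf_eq_shp, hsig h]
    rw [this]
  · have hsubi : sig Vp B i + 1 = sig Vp A i := by
      rw [hBeq]
      exact sig_move_sub hvA.1 hvi (not_mem_of_mem_other hVp hwj (Ne.symm (fun e => hij e)))
    have haddj : sig Vp B j = sig Vp A j + 1 := by
      rw [hBeq]
      exact sig_move_add hwB.2 (not_mem_of_mem_other hVp hvi hij) hwj
    have hsoth : ∀ h, h ≠ i → h ≠ j → sig Vp B h = sig Vp A h := by
      intro h hhi hhj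
      rw [hBeq]
      exact sig_move_none (not_mem_of_mem_other hVp hvi (fun e => hhi e.symm))
        (not_mem_of_mem_other hVp hwj (fun e => hhj e.symm))
    by_cases hss : shapeOf q Vp A = shapeOf q Vp B
    · rw [hss]
    · refine Relation.ReflTransGen.single ⟨hss, ⟨A, hAc, rfl, hPA⟩, ⟨B, hBc, rfl, hPB⟩, ?_⟩
      set σ1 := shapeOf q Vp A with hσ1
      set σ2 := shapeOf q Vp B with hσ2
      have e1 : ∀ h, σ1 h = shp q (Vp h).card (sig Vp A h) := fun h => rfl
      have e2 : ∀ h, σ2 h = shp q (Vp h).card (sig Vp B h) := fun h => rfl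
      have hgei : 1 ≤ sig Vp A i := by omega
      have hlei : sig Vp A i ≤ (Vp i).card := sig_le Vp A i
      have hlej : sig Vp B j ≤ (Vp j).card := sig_le Vp B j
      by_cases di : σ1 i = σ2 i <;> by_cases dj : σ1 j = σ2 j
      · exfalso
        apply hss
        funext h
        by_cases hhi : h = i
        · exact hhi ▸ di
        · by_cases hhj : h = j
          · exact hhj ▸ dj
          · rw [e1, e2, hsoth h hhi hhj]
      · -- only j differs : B-branch
        have hnej : shp q (Vp j).card (sig Vp A j) ≠ shp q (Vp j).card (sig Vp A j + 1) := by
          rw [← e1, ← haddj, ← e2]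
          exact dj
        obtain ⟨hBc', hcl1, hcl2⟩ := Brecover hq (by omega) hnej
        refine Or.inr (Or.inr ⟨j, ?_, ?_, ?_, ?_⟩)
        · intro h
          constructor
          · intro hne'
            by_contra hhj
            apply hne'
            by_cases hhi : h = i
            · exact hhi ▸ di
            · rw [e1, e2, hsoth h hhi hhj]
          · rintro rfl
            exact dj
        · rcases hBc' with ⟨a, b, g1, g2, g3⟩ | ⟨g1, g2⟩ | ⟨g1, g2⟩
          · exact Or.inl ⟨a, b, by rw [e1]; exact g1, by rw [e2, haddj]; exact g2, g3⟩
          · exact Or.inr (Or.inl ⟨by rw [e2, haddj]; exact g1, by rw [e1]; exact g2⟩)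
          · exact Or.inr (Or.inr ⟨by rw [e2, haddj]; exact g1, by rw [e1]; exact g2⟩)
        · refine ⟨A, hAc, rfl, fun i0 h => (nomatch h), fun j0 hj0 hn0 => ?_⟩
          have : j0 = j := (Option.some.inj hj0).symm
          subst this
          exact hcl1 (by rw [← e1]; exact hn0)
        · refine ⟨B, hBc, rfl, fun i0 h => (nomatch h), fun j0 hj0 hn0 => ?_⟩
          have : j0 = j := (Option.some.inj hj0).symm
          subst this
          have := hcl2 (by rw [← haddj, ← e2]; exact hn0)
          omega
      · -- only i differs : A-branch
        have hnei : shp q (Vp i).card (sig Vp A i) ≠ shp q (Vp i).card (sig Vp A i - 1) := by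
          rw [← e1, show sig Vp A i - 1 = sig Vp B i by omega, ← e2]
          exact di
        obtain ⟨hAc', hcl1, hcl2⟩ := Arecover hq hgei hlei hnei
        refine Or.inr (Or.inl ⟨i, ?_, ?_, ?_, ?_⟩)
        · intro h
          constructor
          · intro hne'
            by_contra hhi
            apply hne'
            by_cases hhj : h = j
            · exact hhj ▸ dj
            · rw [e1, e2, hsoth h hhi hhj]
          · rintro rfl
            exact di
        · have eB : sig Vp A i - 1 = sig Vp B i := by omega
          rcases hAc' with ⟨a, b, g1, g2, g3⟩ | ⟨g1, g2⟩ | ⟨g1, g2⟩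
          · exact Or.inl ⟨a, b, by rw [e1]; exact g1, by rw [e2, ← eB]; exact g2, g3⟩
          · exact Or.inr (Or.inl ⟨by rw [e1]; exact g1, by rw [e2, ← eB]; exact g2⟩)
          · exact Or.inr (Or.inr ⟨by rw [e1]; exact g1, by rw [e2, ← eB]; exact g2⟩)
        · refine ⟨A, hAc, rfl, fun i0 hi0 hn0 => ?_, fun j0 h => nomatch h⟩
          have : i0 = i := (Option.some.inj hi0).symm
          subst this
          exact hcl1 (by rw [← e1]; exact hn0)
        · refine ⟨B, hBc, rfl, fun i0 hi0 hn0 => ?_, fun j0 h => nomatch h⟩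
          have : i0 = i := (Option.some.inj hi0).symm
          subst this
          have := hcl2 (by rw [show sig Vp A i - 1 = sig Vp B i by omega, ← e2]; exact hn0)
          omega
      · -- both differ
        have hnei : shp q (Vp i).card (sig Vp A i) ≠ shp q (Vp i).card (sig Vp A i - 1) := by
          rw [← e1, show sig Vp A i - 1 = sig Vp B i by omega, ← e2]
          exact di
        obtain ⟨hAc', hacl1, hacl2⟩ := Arecover hq hgei hlei hnei
        have hnej : shp q (Vp j).card (sig Vp A j) ≠ shp q (Vp j).card (sig Vp A j + 1) := by
          rw [← e1, ← haddj, ← e2]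
          exact dj
        obtain ⟨hBc', hbcl1, hbcl2⟩ := Brecover hq (by omega) hnej
        refine Or.inl ⟨i, j, hij, ?_, ?_, ?_, ?_, ?_⟩
        · intro h
          constructor
          · intro hne'
            by_contra hh
            push_neg at hh
            exact hne' (by rw [e1, e2, hsoth h hh.1 hh.2])
          · rintro (rfl | rfl)
            · exact di
            · exact dj
        · have eB : sig Vp A i - 1 = sig Vp B i := by omega
          rcases hAc' with ⟨a, b, g1, g2, g3⟩ | ⟨g1, g2⟩ | ⟨g1, g2⟩
          · exact Or.inl ⟨a, b, by rw [e1]; exact g1, by rw [e2, ← eB]; exact g2, g3⟩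
          · exact Or.inr (Or.inl ⟨by rw [e1]; exact g1, by rw [e2, ← eB]; exact g2⟩)
          · exact Or.inr (Or.inr ⟨by rw [e1]; exact g1, by rw [e2, ← eB]; exact g2⟩)
        · rcases hBc' with ⟨a, b, g1, g2, g3⟩ | ⟨g1, g2⟩ | ⟨g1, g2⟩
          · exact Or.inl ⟨a, b, by rw [e1]; exact g1, by rw [e2, haddj]; exact g2, g3⟩
          · exact Or.inr (Or.inl ⟨by rw [e2, haddj]; exact g1, by rw [e1]; exact g2⟩)
          · exact Or.inr (Or.inr ⟨by rw [e2, haddj]; exact g1, by rw [e1]; exact g2⟩)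
        · refine ⟨A, hAc, rfl, fun i0 hi0 hn0 => ?_, fun j0 hj0 hn0 => ?_⟩
          · have : i0 = i := (Option.some.inj hi0).symm
            subst this
            exact hacl1 (by rw [← e1]; exact hn0)
          · have : j0 = j := (Option.some.inj hj0).symm
            subst this
            exact hbcl1 (by rw [← e1]; exact hn0)
        · refine ⟨B, hBc, rfl, fun i0 hi0 hn0 => ?_, fun j0 hj0 hn0 => ?_⟩
          · have : i0 = i := (Option.some.inj hi0).symm
            subst this
            have := hacl2 (by rw [show sig Vp A i - 1 = sig Vp B i by omega, ← e2]; exact hn0)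
            omega
          · have : j0 = j := (Option.some.inj hj0).symm
            subst this
            have := hbcl2 (by rw [← haddj, ← e2]; exact hn0)
            omega

end Stmt2Aux

open Stmt2Aux in
/-- For `S, S'` satisfying a shape-invariant predicate `P`, both of
cardinality `k` and both unions of types, there is a TJ(P)-sequence from `S` to `S'`
iff their shapes lie in the same connected component of the size-`k` shape graph
(i.e. are related by the reflexive–transitive closure of the adjacency relation). -/
theorem stmt2 {t q : ℕ} (hq : 1 ≤ q) (Vp : Fin t → Finset α)
    (hVp : IsTypePartition Vp) (P : Finset α → Prop) (hP : ShapeInvariant q Vp P)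
    (k : ℕ) (S S' : Finset α) (hS : P S) (hS' : P S')
    (hkS : S.card = k) (hkS' : S'.card = k)
    (hUS : ∀ i : Fin t, Vp i ⊆ S ∨ Vp i ∩ S = ∅)
    (hUS' : ∀ i : Fin t, Vp i ⊆ S' ∨ Vp i ∩ S' = ∅) :
    (∃ (seq : ℕ → Finset α) (ℓ : ℕ), TJSeq P seq ℓ S S') ↔
      Relation.ReflTransGen (GraphAdj q Vp P k)
        (shapeOf q Vp S) (shapeOf q Vp S') := by
  constructor
  · rintro ⟨seq, ℓ, h0, he, hp, hm⟩
    have hcards : ∀ n, n ≤ ℓ → (seq n).card = k := by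
      intro n
      induction n with
      | zero => intro _; rw [h0, hkS]
      | succ n ih =>
        intro hn
        have hc := ih (by omega)
        obtain ⟨d1, d2⟩ := hm n (by omega)
        have e1 := Finset.card_inter_add_card_sdiff (seq n) (seq (n + 1))
        have e2 := Finset.card_inter_add_card_sdiff (seq (n + 1)) (seq n)
        rw [Finset.inter_comm] at e2
        omega
    have hchain : ∀ n, n ≤ ℓ → Relation.ReflTransGen (GraphAdj q Vp P k)
        (shapeOf q Vp (seq 0)) (shapeOf q Vp (seq n)) := by
      intro n
      induction n with
      | zero => intro _; exact .refl
      | succ n ih =>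
        intro hn
        refine (ih (by omega)).trans ?_
        obtain ⟨d1, d2⟩ := hm n (by omega)
        exact adj_of_move hq hVp (seq n) (seq (n + 1)) (hp n (by omega)) (hp (n + 1) hn)
          (hcards n (by omega)) (hcards (n + 1) hn) d1 d2
    have := hchain ℓ le_rfl
    rwa [h0, he] at this
  · intro hrel
    suffices hgen : ∀ σ, Relation.ReflTransGen (GraphAdj q Vp P k) σ (shapeOf q Vp S') →
        ∀ X : Finset α, P X → X.card = k → shapeOf q Vp X = σ →
        ∃ s ℓ, TJSeq P s ℓ X S' by
      exact hgen _ hrel S hS hkS rfl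
    intro σ hσ
    induction hσ using Relation.ReflTransGen.head_induction_on with
    | refl =>
      intro X hX hXc hXs
      obtain ⟨s0, ℓ0, hs0⟩ := within hVp (X \ S').card X S' rfl (hXc.trans hkS'.symm) hXs
      refine ⟨s0, ℓ0, TJSeq.mono (fun Z hZ => ?_) hs0⟩
      exact (hP Z X (hZ.1.trans hXs.symm)).2 hX
    | head hadj hrest ih =>
      intro X hX hXc hXs
      obtain ⟨s1, ℓ1, Y, hTJ, hPY, hYc, hYs⟩ := step_of_adj hq hVp hP hadj X hX hXc hXs
      obtain ⟨s2, ℓ2, h2⟩ := ih Y hPY hYc hYs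
      exact ⟨_, ℓ1 + ℓ2, TJSeq.append hTJ h2⟩
end

section
/- Let S_1, S_2 ⊆ V with |S_1| = |S_2|, and let σ̄_1 and σ̄_2 be their shapes. Suppose σ̄_1 and σ̄_2 disagree at exactly one index i (that is, σ̄_1(i) ≠ σ̄_2(i) and σ̄_1(h) = σ̄_2(h) for all h ≠ i), and that |V_i ∩ S_1| > |V_i ∩ S_2|. Then there exists an index j ≠ i such that σ̄_1(j) = σ̄_2(j) = ⊤ and σ_{S_1}(j) < |V_j| − q. -/
/-! Shapes framework: `V` is a finite type partitioned into types `Vp 0, …, Vp (t-1)`;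
`q ≥ 1` is a fixed integer. A shape is a function `Fin t → Option ℕ`, where `none`
represents the symbol ⊤. -/

variable {α : Type*} [DecidableEq α] [Fintype α]

/-- If `S₁, S₂` have the same cardinality, their shapes disagree at
exactly one index `i`, and `|V_i ∩ S₁| > |V_i ∩ S₂|`, then there is an index `j ≠ i`
with `σ̄₁(j) = σ̄₂(j) = ⊤` and `σ_{S₁}(j) < |V_j| − q`. -/
theorem stmt6 {t q : ℕ} (hq : 1 ≤ q) (Vp : Fin t → Finset α)
    (hVp : IsTypePartition Vp) (S1 S2 : Finset α) (hcard : S1.card = S2.card)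
    (i : Fin t)
    (hdis : shapeOf q Vp S1 i ≠ shapeOf q Vp S2 i)
    (hagr : ∀ h : Fin t, h ≠ i → shapeOf q Vp S1 h = shapeOf q Vp S2 h)
    (hgt : sig Vp S2 i < sig Vp S1 i) :
    ∃ j : Fin t, j ≠ i ∧ shapeOf q Vp S1 j = none ∧ shapeOf q Vp S2 j = none ∧
      sig Vp S1 j < (Vp j).card - q := by
  obtain ⟨hne, hdisj, hcov⟩ := hVp
  have hsum : ∀ X : Finset α, ∑ k : Fin t, sig Vp X k = X.card := by
    intro X
    have : (Finset.univ.biUnion fun k => Vp k ∩ X) = X := by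
      ext v
      simp only [Finset.mem_biUnion, Finset.mem_inter, Finset.mem_univ, true_and]
      constructor
      · rintro ⟨k, _, hv⟩; exact hv
      · intro hv; obtain ⟨k, hk⟩ := hcov v; exact ⟨k, hk, hv⟩
    conv_rhs => rw [← this]
    rw [Finset.card_biUnion fun a _ b _ hab =>
      (hdisj a b hab).mono Finset.inter_subset_left Finset.inter_subset_left]
    rfl
  -- find j ≠ i with sig S1 j < sig S2 j
  by_cases hex : ∃ j : Fin t, j ≠ i ∧ sig Vp S1 j < sig Vp S2 j
  · obtain ⟨j, hji, hjlt⟩ := hex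
    have hsh := hagr j hji
    unfold shapeOf at hsh ⊢
    by_cases h1 : q ≤ sig Vp S1 j ∧ sig Vp S1 j ≤ (Vp j).card - q
    · by_cases h2 : q ≤ sig Vp S2 j ∧ sig Vp S2 j ≤ (Vp j).card - q
      · refine ⟨j, hji, by simp [h1], by simp [h2], lt_of_lt_of_le hjlt h2.2⟩
      · simp [h1, h2] at hsh
    · by_cases h2 : q ≤ sig Vp S2 j ∧ sig Vp S2 j ≤ (Vp j).card - q
      · simp [h1, h2] at hsh
      · simp [h1, h2] at hsh
        omega
  · exfalso
    push_neg at hex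
    have hlt : ∑ k : Fin t, sig Vp S2 k < ∑ k : Fin t, sig Vp S1 k := by
      apply Finset.sum_lt_sum
      · intro k _
        by_cases hk : k = i
        · subst hk; exact hgt.le
        · exact hex k hk
      · exact ⟨i, Finset.mem_univ i, hgt⟩
    rw [hsum, hsum, hcard] at hlt
    exact lt_irrefl _ hlt
end
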